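/- arXiv:1108.1682 — 4 statements merged into one kernel-verified Lean document; each statement's English description precedes it below -/
import Mathlib

section
/- Let J be a finite index set, T > 0, and let x_i : [0,T] → ℝ^d for i ∈ J be differentiable curves that are pairwise non-colliding: x_i(t) ≠ x_j(t) for all i ≠ j and all t ∈ [0,T]. Let V ∈ C¹(ℝ^d; ℝ) and W ∈ C¹(ℝ^d; ℝ) with W(−ξ) = W(ξ) for all ξ, and suppose the dynamics x_i'(t) = ∇V(x_i(t)) + Σ_{j ∈ J, j ≠ i} ∇W(x_i(t) − x_j(t)) holds for all i and t. Then the entropy S(t) := Σ_{i ∈ J} ( V(x_i(t)) + ½ Σ_{j ∈ J, j ≠ i} W(x_i(t) − x_j(t)) ) satisfies dS/dt (t) = Σ_{i ∈ J} |x_i'(t)|² ≥ 0 for all t; in particular S is nondecreasing on [0,T]. -/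
open MeasureTheory

open RealInnerProductSpace in
private lemma fderiv_apply_eq_inner_gradient {d : ℕ}
    (f : EuclideanSpace ℝ (Fin d) → ℝ) (y u : EuclideanSpace ℝ (Fin d)) :
    fderiv ℝ f y u = ⟪gradient f y, u⟫ := by
  rw [gradient, InnerProductSpace.toDual_apply_apply.symm,
    LinearIsometryEquiv.apply_symm_apply]

open RealInnerProductSpace in
private lemma gradient_neg_of_even {d : ℕ}
    {W : EuclideanSpace ℝ (Fin d) → ℝ} (hW : ContDiff ℝ 1 W)
    (hWsymm : ∀ ξ, W (-ξ) = W ξ) (ξ : EuclideanSpace ℝ (Fin d)) :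
    gradient W (-ξ) = - gradient W ξ := by
  have hWd : Differentiable ℝ W := hW.differentiable one_ne_zero
  have hcomp : (fun z : EuclideanSpace ℝ (Fin d) => W (-z)) = W := by
    funext z; exact hWsymm z
  have h1 : HasFDerivAt (fun z : EuclideanSpace ℝ (Fin d) => W (-z))
      ((fderiv ℝ W (-ξ)).comp (-(ContinuousLinearMap.id ℝ _))) ξ := by
    have := (hWd (-ξ)).hasFDerivAt.comp ξ
      ((hasFDerivAt_id ξ).neg)
    exact this
  rw [hcomp] at h1
  have h2 : fderiv ℝ W ξ = (fderiv ℝ W (-ξ)).comp (-(ContinuousLinearMap.id ℝ _)) :=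
    (hWd ξ).hasFDerivAt.unique h1
  apply ext_inner_right ℝ
  intro u
  have := congrArg (fun L : EuclideanSpace ℝ (Fin d) →L[ℝ] ℝ => L u) h2
  simp only [ContinuousLinearMap.comp_apply, ContinuousLinearMap.neg_apply,
    ContinuousLinearMap.id_apply] at this
  rw [fderiv_apply_eq_inner_gradient, fderiv_apply_eq_inner_gradient] at this
  rw [inner_neg_right] at this
  rw [inner_neg_left]
  linarith [this]

/-- **Entropy inequality for a discrete (microscopic) mass measure, continuous time.**
Finitely many pairwise non-colliding differentiable curves `x_i : [0,T] → ℝ^d` follow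
the dynamics `x_i' = ∇V(x_i) + Σ_{j ≠ i} ∇W(x_i − x_j)` with `V, W ∈ C¹` and `W` even.
Then the entropy `S(t) = Σ_i ( V(x_i) + ½ Σ_{j ≠ i} W(x_i − x_j) )` satisfies
`dS/dt = Σ_i |x_i'|² ≥ 0` on `[0,T]`; in particular `S` is nondecreasing on `[0,T]`. -/
theorem entropy_inequality_discrete_measure {d : ℕ} {ι : Type*} [Fintype ι] [DecidableEq ι]
    (T : ℝ) (hT : 0 < T)
    (x : ι → ℝ → EuclideanSpace ℝ (Fin d))
    (V W : EuclideanSpace ℝ (Fin d) → ℝ)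
    (hV : ContDiff ℝ 1 V) (hW : ContDiff ℝ 1 W)
    (hWsymm : ∀ ξ, W (-ξ) = W ξ)
    (hnoncollide : ∀ t ∈ Set.Icc (0:ℝ) T, ∀ i j, i ≠ j → x i t ≠ x j t)
    (v : ι → ℝ → EuclideanSpace ℝ (Fin d))
    (hv : ∀ i t, v i t = gradient V (x i t) +
      ∑ j ∈ Finset.univ.erase i, gradient W (x i t - x j t))
    (hdyn : ∀ i, ∀ t ∈ Set.Icc (0:ℝ) T,
      HasDerivWithinAt (x i) (v i t) (Set.Icc (0:ℝ) T) t)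
    (S : ℝ → ℝ)
    (hS : ∀ t, S t = ∑ i, (V (x i t) +
      (1/2) * ∑ j ∈ Finset.univ.erase i, W (x i t - x j t))) :
    (∀ t ∈ Set.Icc (0:ℝ) T,
        HasDerivWithinAt S (∑ i, ‖v i t‖ ^ 2) (Set.Icc (0:ℝ) T) t ∧
        0 ≤ ∑ i, ‖v i t‖ ^ 2) ∧
      MonotoneOn S (Set.Icc (0:ℝ) T) := by
  classical
  have hVd : Differentiable ℝ V := hV.differentiable one_ne_zero
  have hWd : Differentiable ℝ W := hW.differentiable one_ne_zero
  -- the key derivative statement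
  have key : ∀ t ∈ Set.Icc (0:ℝ) T,
      HasDerivWithinAt S (∑ i, ‖v i t‖ ^ 2) (Set.Icc (0:ℝ) T) t := by
    intro t ht
    -- derivative of each building block
    have hDeriv : HasDerivWithinAt S
        (∑ i, ((inner ℝ (gradient V (x i t)) (v i t) : ℝ) +
          (1/2) * ∑ j ∈ Finset.univ.erase i,
            (inner ℝ (gradient W (x i t - x j t)) (v i t - v j t) : ℝ)))
        (Set.Icc (0:ℝ) T) t := by
      have : HasDerivWithinAt (fun s => ∑ i, (V (x i s) +
          (1/2) * ∑ j ∈ Finset.univ.erase i, W (x i s - x j s)))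
          (∑ i, ((inner ℝ (gradient V (x i t)) (v i t) : ℝ) +
            (1/2) * ∑ j ∈ Finset.univ.erase i,
              (inner ℝ (gradient W (x i t - x j t)) (v i t - v j t) : ℝ)))
          (Set.Icc (0:ℝ) T) t := by
        apply HasDerivWithinAt.fun_sum
        intro i _
        apply HasDerivWithinAt.add
        · have h := (hVd (x i t)).hasFDerivAt.comp_hasDerivWithinAt t (hdyn i t ht)
          rwa [fderiv_apply_eq_inner_gradient] at h
        · apply HasDerivWithinAt.const_mul
          apply HasDerivWithinAt.fun_sum
          intro j _
          have hcurve : HasDerivWithinAt (fun s => x i s - x j s) (v i t - v j t)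
              (Set.Icc (0:ℝ) T) t := (hdyn i t ht).sub (hdyn j t ht)
          have h := (hWd (x i t - x j t)).hasFDerivAt.comp_hasDerivWithinAt t hcurve
          rwa [fderiv_apply_eq_inner_gradient] at h
      exact this.congr (fun s _ => hS s) (hS t)
    -- algebraic identity for the derivative value
    have halg : (∑ i, ((inner ℝ (gradient V (x i t)) (v i t) : ℝ) +
          (1/2) * ∑ j ∈ Finset.univ.erase i,
            (inner ℝ (gradient W (x i t - x j t)) (v i t - v j t) : ℝ)))
        = ∑ i, ‖v i t‖ ^ 2 := by
      have hswap : ∀ g : ι → ι → ℝ,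
          ∑ i, ∑ j ∈ Finset.univ.erase i, g i j
            = ∑ i, ∑ j ∈ Finset.univ.erase i, g j i := by
        intro g
        rw [Finset.sum_comm' (t' := Finset.univ) (s' := fun j => Finset.univ.erase j)]
        intro i j
        simp [Finset.mem_erase, ne_comm]
      have hB : ∑ i, ∑ j ∈ Finset.univ.erase i,
            (inner ℝ (gradient W (x i t - x j t)) (v j t) : ℝ)
          = - ∑ i, ∑ j ∈ Finset.univ.erase i,
            (inner ℝ (gradient W (x i t - x j t)) (v i t) : ℝ) := by
        rw [hswap (fun i j => (inner ℝ (gradient W (x i t - x j t)) (v j t) : ℝ))]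
        rw [← Finset.sum_neg_distrib]
        apply Finset.sum_congr rfl
        intro i _
        rw [← Finset.sum_neg_distrib]
        apply Finset.sum_congr rfl
        intro j _
        have : x j t - x i t = -(x i t - x j t) := (neg_sub _ _).symm
        rw [this, gradient_neg_of_even hW hWsymm, inner_neg_left]
      calc (∑ i, ((inner ℝ (gradient V (x i t)) (v i t) : ℝ) +
          (1/2) * ∑ j ∈ Finset.univ.erase i,
            (inner ℝ (gradient W (x i t - x j t)) (v i t - v j t) : ℝ)))
          = ∑ i, ((inner ℝ (gradient V (x i t)) (v i t) : ℝ) +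
            ∑ j ∈ Finset.univ.erase i,
              (inner ℝ (gradient W (x i t - x j t)) (v i t) : ℝ)) := by
            have expand : ∀ i, (1/2 : ℝ) * ∑ j ∈ Finset.univ.erase i,
                (inner ℝ (gradient W (x i t - x j t)) (v i t - v j t) : ℝ)
              = (1/2) * (∑ j ∈ Finset.univ.erase i,
                  (inner ℝ (gradient W (x i t - x j t)) (v i t) : ℝ)
                - ∑ j ∈ Finset.univ.erase i,
                  (inner ℝ (gradient W (x i t - x j t)) (v j t) : ℝ)) := by
              intro i
              rw [← Finset.sum_sub_distrib]
              congr 1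
              exact Finset.sum_congr rfl fun j _ => inner_sub_right _ _ _
            rw [Finset.sum_congr rfl fun i _ => by rw [expand i]]
            rw [Finset.sum_add_distrib, Finset.sum_add_distrib]
            congr 1
            rw [← Finset.mul_sum, Finset.sum_sub_distrib, hB]
            ring
          _ = ∑ i, ‖v i t‖ ^ 2 := by
            apply Finset.sum_congr rfl
            intro i _
            rw [← sum_inner, ← inner_add_left, ← hv i t,
              real_inner_self_eq_norm_sq]
    rw [← halg]; exact hDeriv
  have hnonneg : ∀ t, (0:ℝ) ≤ ∑ i, ‖v i t‖ ^ 2 :=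
    fun t => Finset.sum_nonneg fun i _ => by positivity
  refine ⟨fun t ht => ⟨key t ht, hnonneg t⟩, ?_⟩
  have hint : interior (Set.Icc (0:ℝ) T) = Set.Ioo 0 T := interior_Icc
  apply monotoneOn_of_deriv_nonneg (convex_Icc 0 T)
  · exact fun t ht => (key t ht).continuousWithinAt
  · intro t ht
    rw [hint] at ht
    have := (key t (Set.mem_Icc_of_Ioo ht)).hasDerivAt
      (Icc_mem_nhds ht.1 ht.2)
    exact this.differentiableAt.differentiableWithinAt
  · intro t ht
    rw [hint] at ht
    have := (key t (Set.mem_Icc_of_Ioo ht)).hasDerivAt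
      (Icc_mem_nhds ht.1 ht.2)
    rw [this.deriv]
    exact hnonneg t
end

section
/- Let μ be a finite, compactly supported, nonnegative measure on ℝ^d that is absolutely continuous with respect to Lebesgue measure with bounded density. Let V, W ∈ C²(ℝ^d; ℝ) with W(−ξ) = W(ξ) for all ξ and with bounded first and second derivatives of V and W on a neighbourhood of the relevant supports. Define v(x) := ∇V(x) + (∇W ⋆ μ)(x), for Δt > 0 define the one-step motion mapping χ_Δt(x) := x + Δt·v(x) and the pushforward μ_Δt := χ_Δt#μ, and define the entropy S(Δt) := ∫ ( V + ½ W ⋆ μ_Δt ) dμ_Δt, with S(0) = ∫ ( V + ½ W ⋆ μ ) dμ. Then S(Δt) = S(0) + Δt ∫ |v|² dμ + O(Δt²) as Δt → 0⁺; in particular, up to O(Δt²)-terms, S(Δt) ≥ S(0) (discrete-in-time entropy inequality). -/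
open MeasureTheory Topology Asymptotics
open scoped ENNReal NNReal

section Aux

variable {d : ℕ} {F : Type*} [NormedAddCommGroup F] [NormedSpace ℝ F]

/-- Second-order Taylor bound for a `C²` function with bounded second derivative. -/
lemma entropy_aux_taylor {E : Type*} [NormedAddCommGroup E] [NormedSpace ℝ E]
    {f : E → F} (hf : ContDiff ℝ 2 f) {C : ℝ}
    (hC : ∀ x, ‖fderiv ℝ (fderiv ℝ f) x‖ ≤ C) (a h : E) :
    ‖f (a + h) - f a - fderiv ℝ f a h‖ ≤ C * ‖h‖ ^ 2 := by
  have hC0 : 0 ≤ C := by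
    have h2 : (0:ℝ) ≤ ‖fderiv ℝ (fderiv ℝ f) a‖ := ContinuousLinearMap.opNorm_nonneg _
    exact h2.trans (hC a)
  have hdf : Differentiable ℝ (fderiv ℝ f) :=
    (hf.fderiv_right (m := 1) (by norm_num)).differentiable (by norm_num)
  have hlip : LipschitzWith (Real.toNNReal C) (fderiv ℝ f) := by
    apply lipschitzWith_of_nnnorm_fderiv_le hdf
    intro x
    simpa [← NNReal.coe_le_coe, Real.coe_toNNReal _ hC0] using hC x
  have hconv : Convex ℝ (Metric.closedBall a ‖h‖) := convex_closedBall _ _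
  have hd : ∀ x ∈ Metric.closedBall a ‖h‖, DifferentiableAt ℝ f x := fun x _ =>
    (hf.differentiable (by norm_num)).differentiableAt
  have hb : ∀ x ∈ Metric.closedBall a ‖h‖, ‖fderiv ℝ f x - fderiv ℝ f a‖ ≤ C * ‖h‖ := by
    intro x hx
    calc ‖fderiv ℝ f x - fderiv ℝ f a‖ ≤ C * ‖x - a‖ := by
          simpa [dist_eq_norm, Real.coe_toNNReal _ hC0] using hlip.dist_le_mul x a
    _ ≤ C * ‖h‖ := mul_le_mul_of_nonneg_left (by simpa [dist_eq_norm] using hx) hC0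
  have key := hconv.norm_image_sub_le_of_norm_fderiv_le' hd hb
    (Metric.mem_closedBall_self (norm_nonneg h)) (y := a + h) (by simp [dist_eq_norm])
  calc ‖f (a + h) - f a - fderiv ℝ f a h‖ = ‖f (a+h) - f a - fderiv ℝ f a ((a+h) - a)‖ := by
        simp
  _ ≤ C * ‖h‖ * ‖(a + h) - a‖ := key
  _ = C * ‖h‖ ^ 2 := by simp [sq]; ring

/-- A continuous function is integrable with respect to a finite measure that vanishes
outside a compact set. -/
lemma entropy_aux_integrable {α : Type*} [MeasurableSpace α] [TopologicalSpace α]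
    [OpensMeasurableSpace α] [SecondCountableTopology α]
    {μ : Measure α} [IsFiniteMeasure μ]
    {K : Set α} (hK : IsCompact K) (hμK : μ Kᶜ = 0)
    {f : α → F} (hf : Continuous f) : Integrable f μ := by
  obtain ⟨B, hB⟩ := hK.exists_bound_of_continuousOn hf.continuousOn
  refine Integrable.mono' (integrable_const B) hf.aestronglyMeasurable ?_
  refine measure_mono_null (fun x hx => ?_) hμK
  simp only [Set.mem_setOf_eq, Set.mem_compl_iff] at hx ⊢
  exact fun hxK => hx (hB x hxK)

/-- The convolution-type integral of a Lipschitz function is (Lipschitz, hence) continuous. -/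
lemma entropy_aux_cont (μ : Measure (EuclideanSpace ℝ (Fin d))) [IsFiniteMeasure μ]
    {u : EuclideanSpace ℝ (Fin d) → F} {L : ℝ≥0} (hu : LipschitzWith L u)
    (h : EuclideanSpace ℝ (Fin d) → EuclideanSpace ℝ (Fin d))
    (hint : ∀ x, Integrable (fun y => u (x - h y)) μ) :
    Continuous fun x => ∫ y, u (x - h y) ∂μ := by
  refine (LipschitzWith.of_dist_le_mul (K := L * (μ Set.univ).toNNReal)
    (fun x x' => ?_)).continuous
  rw [dist_eq_norm, ← integral_sub (hint x) (hint x')]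
  calc ‖∫ y, (u (x - h y) - u (x' - h y)) ∂μ‖
      ≤ ∫ y, ‖u (x - h y) - u (x' - h y)‖ ∂μ := norm_integral_le_integral_norm _
    _ ≤ ∫ _y, (L : ℝ) * dist x x' ∂μ := by
        refine integral_mono ((hint x).sub (hint x')).norm (integrable_const _) fun y => ?_
        have := hu.dist_le_mul (x - h y) (x' - h y)
        rw [dist_eq_norm] at this ⊢
        simpa [sub_sub_sub_cancel_right, ← dist_eq_norm] using this
    _ = (L * (μ Set.univ).toNNReal : ℝ≥0) * dist x x' := by
        rw [integral_const, smul_eq_mul]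
        push_cast [ENNReal.coe_toNNReal (measure_ne_top μ _)]
        simp only [measureReal_def]
        ring

/-- A `C¹` function with bounded derivative is Lipschitz. -/
lemma entropy_aux_lip {E : Type*} [NormedAddCommGroup E] [NormedSpace ℝ E]
    {f : E → F} (hf : Differentiable ℝ f) {C : ℝ} (hC0 : 0 ≤ C)
    (hC : ∀ x, ‖fderiv ℝ f x‖ ≤ C) : LipschitzWith C.toNNReal f := by
  apply lipschitzWith_of_nnnorm_fderiv_le hf
  intro x
  simpa [← NNReal.coe_le_coe, Real.coe_toNNReal _ hC0] using hC x

end Aux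

set_option maxHeartbeats 1000000 in
/-- **Theorem 4.30 (discrete-in-time entropy inequality, one population).**
Let `μ` be a finite nonnegative measure on `ℝ^d` with compact support, absolutely
continuous with respect to Lebesgue measure with bounded density.  Let `V, W ∈ C²`
with `W` even and with bounded first and second derivatives.  With
`v = ∇V + ∇W ⋆ μ`, the explicit-Euler motion mapping `χ_Δt(x) = x + Δt·v(x)`, the
pushforward `μ_Δt = χ_Δt#μ`, and the entropy `S(Δt) = ∫ (V + ½ W ⋆ μ_Δt) dμ_Δt`,
one has `S(Δt) = S(0) + Δt ∫ |v|² dμ + O(Δt²)` as `Δt → 0⁺`; in particular, up to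
`O(Δt²)`-terms, `S(Δt) ≥ S(0)`. -/
theorem discrete_time_entropy_inequality {d : ℕ}
    (μ : Measure (EuclideanSpace ℝ (Fin d))) [IsFiniteMeasure μ]
    (K : Set (EuclideanSpace ℝ (Fin d))) (hK : IsCompact K) (hμK : μ Kᶜ = 0)
    (hac : μ ≪ volume)
    (hbd : ∃ C : ℝ≥0∞, C ≠ ⊤ ∧ ∀ s, μ s ≤ C * volume s)
    (V W : EuclideanSpace ℝ (Fin d) → ℝ)
    (hV : ContDiff ℝ 2 V) (hW : ContDiff ℝ 2 W)
    (hWsymm : ∀ ξ, W (-ξ) = W ξ)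
    (hVbd : ∃ C : ℝ, ∀ x, ‖fderiv ℝ V x‖ ≤ C ∧ ‖fderiv ℝ (fderiv ℝ V) x‖ ≤ C)
    (hWbd : ∃ C : ℝ, ∀ x, ‖fderiv ℝ W x‖ ≤ C ∧ ‖fderiv ℝ (fderiv ℝ W) x‖ ≤ C)
    (v : EuclideanSpace ℝ (Fin d) → EuclideanSpace ℝ (Fin d))
    (hv : ∀ x, v x = gradient V x + ∫ y, gradient W (x - y) ∂μ)
    (χ : ℝ → EuclideanSpace ℝ (Fin d) → EuclideanSpace ℝ (Fin d))
    (hχ : ∀ Δt x, χ Δt x = x + Δt • v x)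
    (S : ℝ → ℝ)
    (hS : ∀ Δt, S Δt = ∫ x, (V x + (1/2) * ∫ y, W (x - y) ∂(Measure.map (χ Δt) μ))
      ∂(Measure.map (χ Δt) μ)) :
    (fun Δt => S Δt - S 0 - Δt * ∫ x, ‖v x‖ ^ 2 ∂μ)
      =O[𝓝[>] (0:ℝ)] fun Δt => Δt ^ 2 := by
  obtain ⟨Cv, hVbd⟩ := hVbd
  obtain ⟨Cw, hWbd⟩ := hWbd
  have hCv0 : 0 ≤ Cv := le_trans (norm_nonneg _) (hVbd 0).1
  have hCw0 : 0 ≤ Cw := le_trans (norm_nonneg _) (hWbd 0).1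
  set U : ℝ := (μ Set.univ).toReal with hUdef
  have hU0 : 0 ≤ U := ENNReal.toReal_nonneg
  have hVd : Differentiable ℝ V := hV.differentiable (by norm_num)
  have hWd : Differentiable ℝ W := hW.differentiable (by norm_num)
  -- Lipschitz and continuity facts
  have hWlip : LipschitzWith Cw.toNNReal W :=
    entropy_aux_lip hWd hCw0 fun x => (hWbd x).1
  have hfdWlip : LipschitzWith Cw.toNNReal (fderiv ℝ W) := by
    refine entropy_aux_lip ?_ hCw0 fun x => (hWbd x).2
    exact (hW.fderiv_right (m := 1) (by norm_num)).differentiable (by norm_num)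
  have hgradWlip : LipschitzWith Cw.toNNReal (gradient W) := by
    have : gradient W = fun x =>
        (InnerProductSpace.toDual ℝ (EuclideanSpace ℝ (Fin d))).symm (fderiv ℝ W x) := rfl
    rw [this]
    have h := (InnerProductSpace.toDual ℝ (EuclideanSpace ℝ (Fin d))).symm.lipschitz.comp
      hfdWlip
    rw [one_mul] at h
    exact h
  have hfdVc : Continuous (fderiv ℝ V) := hV.continuous_fderiv (by norm_num)
  have hfdWc : Continuous (fderiv ℝ W) := hW.continuous_fderiv (by norm_num)
  have hgradVc : Continuous (gradient V) := by
    have : gradient V = fun x =>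
        (InnerProductSpace.toDual ℝ (EuclideanSpace ℝ (Fin d))).symm (fderiv ℝ V x) := rfl
    rw [this]
    exact (InnerProductSpace.toDual ℝ (EuclideanSpace ℝ (Fin d))).symm.continuous.comp hfdVc
  have hgradWc : Continuous (gradient W) := hgradWlip.continuous
  -- gradient identities
  have hgradV_norm : ∀ x, ‖gradient V x‖ ≤ Cv := fun x => by
    rw [gradient, LinearIsometryEquiv.norm_map]; exact (hVbd x).1
  have hgradW_norm : ∀ z, ‖gradient W z‖ ≤ Cw := fun z => by
    rw [gradient, LinearIsometryEquiv.norm_map]; exact (hWbd z).1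
  have hinnerV : ∀ x u, fderiv ℝ V x u = inner ℝ (gradient V x) u := fun x u => by
    rw [gradient, ← InnerProductSpace.toDual_symm_apply]
  have hinnerW : ∀ z u, fderiv ℝ W z u = inner ℝ (gradient W z) u := fun z u => by
    rw [gradient, ← InnerProductSpace.toDual_symm_apply]
  -- oddness of ∇W
  have hodd : ∀ ξ, fderiv ℝ W (-ξ) = - fderiv ℝ W ξ := by
    intro ξ
    set n : EuclideanSpace ℝ (Fin d) →L[ℝ] EuclideanSpace ℝ (Fin d) :=
      -(ContinuousLinearMap.id ℝ _) with hn
    have hncomp : W ∘ n = W := by funext x; simp [hn, hWsymm]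
    have h1 : HasFDerivAt (W ∘ n) ((fderiv ℝ W (-ξ)).comp n) ξ := by
      refine HasFDerivAt.comp ξ ?_ (n.hasFDerivAt)
      simpa [hn] using (hWd (-ξ)).hasFDerivAt
    rw [hncomp] at h1
    rw [h1.fderiv]
    ext u
    simp [hn]
  -- integrability of convolution kernels
  have hIconv : ∀ x, Integrable (fun y => gradient W (x - y)) μ := fun x =>
    entropy_aux_integrable hK hμK (hgradWc.comp (continuous_const.sub continuous_id))
  have hconvc : Continuous (fun x => ∫ y, gradient W (x - y) ∂μ) :=
    entropy_aux_cont μ hgradWlip (fun y => y) hIconv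
  have hvc : Continuous v := by
    have : v = fun x => gradient V x + ∫ y, gradient W (x - y) ∂μ := funext hv
    rw [this]; exact hgradVc.add hconvc
  have hχc : ∀ Δt, Continuous (χ Δt) := fun Δt => by
    have : χ Δt = fun x => x + Δt • v x := funext (hχ Δt)
    rw [this]; exact continuous_id.add (hvc.const_smul Δt)
  have hχmeas : ∀ Δt, AEMeasurable (χ Δt) μ := fun Δt => (hχc Δt).measurable.aemeasurable
  -- bound on v
  set M : ℝ := Cv + Cw * U with hMdef
  have hMv : ∀ x, ‖v x‖ ≤ M := by
    intro x
    rw [hv]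
    calc ‖gradient V x + ∫ y, gradient W (x - y) ∂μ‖
        ≤ ‖gradient V x‖ + ‖∫ y, gradient W (x - y) ∂μ‖ := norm_add_le _ _
      _ ≤ Cv + Cw * U := by
          refine add_le_add (hgradV_norm x) ?_
          calc ‖∫ y, gradient W (x - y) ∂μ‖ ≤ ∫ y, ‖gradient W (x - y)‖ ∂μ :=
                norm_integral_le_integral_norm _
            _ ≤ ∫ _y, Cw ∂μ :=
                integral_mono (hIconv x).norm (integrable_const _) fun y => hgradW_norm _
            _ = Cw * U := by rw [integral_const, smul_eq_mul, mul_comm]; rfl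
  have hM0 : 0 ≤ M := le_trans (norm_nonneg _) (hMv 0)
  -- the entropy in terms of μ only
  have key : ∀ Δt, S Δt
      = ∫ x, (V (χ Δt x) + (1/2) * ∫ y, W (χ Δt x - χ Δt y) ∂μ) ∂μ := by
    intro Δt
    rw [hS]
    have h1 : ∀ x : EuclideanSpace ℝ (Fin d),
        ∫ y, W (x - y) ∂(Measure.map (χ Δt) μ) = ∫ y, W (x - χ Δt y) ∂μ := fun x =>
      integral_map (hχmeas Δt)
        ((hW.continuous.comp (continuous_const.sub continuous_id)).aestronglyMeasurable)
    simp only [h1]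
    exact integral_map (hχmeas Δt)
      ((hV.continuous.add (continuous_const.mul (entropy_aux_cont μ hWlip (χ Δt) fun x =>
        entropy_aux_integrable hK hμK
          (hW.continuous.comp (continuous_const.sub (hχc Δt)))))).aestronglyMeasurable)
  have hχ0 : χ 0 = fun x => x := funext fun x => by simp [hχ]
  have keyzero : S 0 = ∫ x, (V x + (1/2) * ∫ y, W (x - y) ∂μ) ∂μ := by
    rw [key 0, hχ0]
  have hCv2 : ∀ x, ‖fderiv ℝ (fderiv ℝ V) x‖ ≤ Cv := fun x => (hVbd x).2
  have hCw2 : ∀ x, ‖fderiv ℝ (fderiv ℝ W) x‖ ≤ Cw := fun x => (hWbd x).2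
  -- product measure vanishes outside the compact set K ×ˢ K
  have hKK : IsCompact (K ×ˢ K) := hK.prod hK
  have hprodnull : (μ.prod μ) ((K ×ˢ K)ᶜ) = 0 := by
    have hsub : (K ×ˢ K)ᶜ ⊆ (Kᶜ ×ˢ Set.univ) ∪ (Set.univ ×ˢ Kᶜ) := by
      intro p hp
      simp only [Set.mem_compl_iff, Set.mem_prod, not_and_or] at hp
      rcases hp with h | h
      · exact Or.inl (by simp [h])
      · exact Or.inr (by simp [h])
    refine measure_mono_null hsub (measure_union_null ?_ ?_)
    · rw [Measure.prod_prod, hμK, zero_mul]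
    · rw [Measure.prod_prod, hμK, mul_zero]
  have hprodint : ∀ f : EuclideanSpace ℝ (Fin d) × EuclideanSpace ℝ (Fin d) → ℝ,
      Continuous f → Integrable f (μ.prod μ) := fun f hf =>
    entropy_aux_integrable hKK hprodnull hf
  -- the inner-product identity for the velocity
  have hC1 : ∀ x, ‖v x‖ ^ 2
      = fderiv ℝ V x (v x) + ∫ y, fderiv ℝ W (x - y) (v x) ∂μ := by
    intro x
    have h0 : (inner ℝ (gradient V x + ∫ y, gradient W (x - y) ∂μ) (v x) : ℝ)
        = ‖v x‖ ^ 2 := by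
      rw [← hv x, real_inner_self_eq_norm_sq]
    rw [← h0, inner_add_left]
    congr 1
    · exact (hinnerV x (v x)).symm
    · calc (inner ℝ (∫ y, gradient W (x - y) ∂μ) (v x) : ℝ)
          = inner ℝ (v x) (∫ y, gradient W (x - y) ∂μ) := real_inner_comm _ _
        _ = ∫ y, (inner ℝ (v x) (gradient W (x - y)) : ℝ) ∂μ :=
            (integral_inner (hIconv x) (v x)).symm
        _ = ∫ y, fderiv ℝ W (x - y) (v x) ∂μ := by
            refine integral_congr_ae (Filter.Eventually.of_forall fun y => ?_)
            show (inner ℝ (v x) (gradient W (x - y)) : ℝ) = fderiv ℝ W (x - y) (v x)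
            rw [real_inner_comm]
            exact (hinnerW _ _).symm
  -- the main quantitative bound
  have main : ∀ Δt : ℝ, ‖S Δt - S 0 - Δt * ∫ x, ‖v x‖ ^ 2 ∂μ‖
      ≤ (Cv * M ^ 2 * U + 2 * Cw * M ^ 2 * U ^ 2) * Δt ^ 2 := by
    intro Δt
    -- integrability of all the single-variable integrands
    have iA : Integrable (fun x => V (χ Δt x)) μ :=
      entropy_aux_integrable hK hμK (hV.continuous.comp (hχc Δt))
    have iA0 : Integrable V μ := entropy_aux_integrable hK hμK hV.continuous
    have iL1 : Integrable (fun x => fderiv ℝ V x (v x)) μ :=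
      entropy_aux_integrable hK hμK (hfdVc.clm_apply hvc)
    -- joint continuity on the product
    have cB : Continuous (fun p : EuclideanSpace ℝ (Fin d) × EuclideanSpace ℝ (Fin d) =>
        W (χ Δt p.1 - χ Δt p.2)) :=
      hW.continuous.comp (((hχc Δt).comp continuous_fst).sub ((hχc Δt).comp continuous_snd))
    have cB0 : Continuous (fun p : EuclideanSpace ℝ (Fin d) × EuclideanSpace ℝ (Fin d) =>
        W (p.1 - p.2)) := hW.continuous.comp (continuous_fst.sub continuous_snd)
    have cG : Continuous (fun p : EuclideanSpace ℝ (Fin d) × EuclideanSpace ℝ (Fin d) =>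
        fderiv ℝ W (p.1 - p.2) (v p.1)) :=
      (hfdWc.comp (continuous_fst.sub continuous_snd)).clm_apply (hvc.comp continuous_fst)
    have cG' : Continuous (fun p : EuclideanSpace ℝ (Fin d) × EuclideanSpace ℝ (Fin d) =>
        fderiv ℝ W (p.2 - p.1) (v p.2)) :=
      (hfdWc.comp (continuous_snd.sub continuous_fst)).clm_apply (hvc.comp continuous_snd)
    have cL2 : Continuous (fun p : EuclideanSpace ℝ (Fin d) × EuclideanSpace ℝ (Fin d) =>
        fderiv ℝ W (p.1 - p.2) (v p.1 - v p.2)) :=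
      (hfdWc.comp (continuous_fst.sub continuous_snd)).clm_apply
        ((hvc.comp continuous_fst).sub (hvc.comp continuous_snd))
    -- integrability of the iterated integrals
    have iB : Integrable (fun x => ∫ y, W (χ Δt x - χ Δt y) ∂μ) μ :=
      (hprodint _ cB).integral_prod_left
    have iB0 : Integrable (fun x => ∫ y, W (x - y) ∂μ) μ :=
      (hprodint _ cB0).integral_prod_left
    have iG : Integrable (fun x => ∫ y, fderiv ℝ W (x - y) (v x) ∂μ) μ :=
      (hprodint _ cG).integral_prod_left
    have iG' : Integrable (fun x => ∫ y, fderiv ℝ W (y - x) (v y) ∂μ) μ :=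
      (hprodint _ cG').integral_prod_left
    have iL2 : Integrable (fun x => ∫ y, fderiv ℝ W (x - y) (v x - v y) ∂μ) μ :=
      (hprodint _ cL2).integral_prod_left
    -- integrability in the inner variable
    have iyW : ∀ x, Integrable (fun y => W (χ Δt x - χ Δt y)) μ := fun x =>
      entropy_aux_integrable hK hμK
        (hW.continuous.comp (continuous_const.sub (hχc Δt)))
    have iyW0 : ∀ x, Integrable (fun y => W (x - y)) μ := fun x =>
      entropy_aux_integrable hK hμK (hW.continuous.comp (continuous_const.sub continuous_id))
    have iyG : ∀ x, Integrable (fun y => fderiv ℝ W (x - y) (v x)) μ := fun x =>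
      entropy_aux_integrable hK hμK
        ((hfdWc.comp (continuous_const.sub continuous_id)).clm_apply continuous_const)
    have iyG' : ∀ x, Integrable (fun y => fderiv ℝ W (y - x) (v y)) μ := fun x =>
      entropy_aux_integrable hK hμK
        ((hfdWc.comp (continuous_id.sub continuous_const)).clm_apply hvc)
    have iyL2 : ∀ x, Integrable (fun y => fderiv ℝ W (x - y) (v x - v y)) μ := fun x =>
      entropy_aux_integrable hK hμK
        ((hfdWc.comp (continuous_const.sub continuous_id)).clm_apply
          (continuous_const.sub hvc))
    -- symmetrization
    have hsplit2 : ∀ x, ∫ y, fderiv ℝ W (x - y) (v x - v y) ∂μ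
        = (∫ y, fderiv ℝ W (x - y) (v x) ∂μ) + ∫ y, fderiv ℝ W (y - x) (v y) ∂μ := by
      intro x
      rw [← integral_add (iyG x) (iyG' x)]
      refine integral_congr_ae (Filter.Eventually.of_forall fun y => ?_)
      show fderiv ℝ W (x - y) (v x - v y)
        = fderiv ℝ W (x - y) (v x) + fderiv ℝ W (y - x) (v y)
      have hne : fderiv ℝ W (y - x) = - fderiv ℝ W (x - y) := by
        rw [← neg_sub x y, hodd]
      rw [hne, map_sub]
      simp only [ContinuousLinearMap.neg_apply]
      ring
    have hswap : ∫ x, (∫ y, fderiv ℝ W (y - x) (v y) ∂μ) ∂μ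
        = ∫ x, (∫ y, fderiv ℝ W (x - y) (v x) ∂μ) ∂μ := by
      exact integral_integral_swap (f := fun x y => fderiv ℝ W (y - x) (v y))
        (hprodint _ cG')
    have hI : ∫ x, ‖v x‖ ^ 2 ∂μ = (∫ x, fderiv ℝ V x (v x) ∂μ)
        + ∫ x, (∫ y, fderiv ℝ W (x - y) (v x) ∂μ) ∂μ := by
      rw [← integral_add iL1 iG]
      exact integral_congr_ae (Filter.Eventually.of_forall fun x => hC1 x)
    have hL2I : ∫ x, (∫ y, fderiv ℝ W (x - y) (v x - v y) ∂μ) ∂μ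
        = 2 * ∫ x, (∫ y, fderiv ℝ W (x - y) (v x) ∂μ) ∂μ := by
      calc ∫ x, (∫ y, fderiv ℝ W (x - y) (v x - v y) ∂μ) ∂μ
          = ∫ x, ((∫ y, fderiv ℝ W (x - y) (v x) ∂μ)
              + ∫ y, fderiv ℝ W (y - x) (v y) ∂μ) ∂μ :=
            integral_congr_ae (Filter.Eventually.of_forall hsplit2)
        _ = (∫ x, (∫ y, fderiv ℝ W (x - y) (v x) ∂μ) ∂μ)
              + ∫ x, (∫ y, fderiv ℝ W (y - x) (v y) ∂μ) ∂μ := integral_add iG iG'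
        _ = 2 * ∫ x, (∫ y, fderiv ℝ W (x - y) (v x) ∂μ) ∂μ := by rw [hswap]; ring
    -- pointwise Taylor bounds
    have hR1b : ∀ x, |V (χ Δt x) - V x - Δt * fderiv ℝ V x (v x)| ≤ Cv * M ^ 2 * Δt ^ 2 := by
      intro x
      have ht := entropy_aux_taylor hV hCv2 x (Δt • v x)
      have he : fderiv ℝ V x (Δt • v x) = Δt * fderiv ℝ V x (v x) := by
        rw [_root_.map_smul]; simp
      rw [hχ]
      calc |V (x + Δt • v x) - V x - Δt * fderiv ℝ V x (v x)|
          = ‖V (x + Δt • v x) - V x - fderiv ℝ V x (Δt • v x)‖ := by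
            rw [he, Real.norm_eq_abs]
        _ ≤ Cv * ‖Δt • v x‖ ^ 2 := ht
        _ = Cv * (Δt ^ 2 * ‖v x‖ ^ 2) := by
            rw [norm_smul, mul_pow, Real.norm_eq_abs, sq_abs]
        _ ≤ Cv * (Δt ^ 2 * M ^ 2) := by
            have h2 : ‖v x‖ ^ 2 ≤ M ^ 2 := pow_le_pow_left₀ (norm_nonneg _) (hMv x) 2
            gcongr
        _ = Cv * M ^ 2 * Δt ^ 2 := by ring
    have hR2b : ∀ x y, |W (χ Δt x - χ Δt y) - W (x - y)
        - Δt * fderiv ℝ W (x - y) (v x - v y)| ≤ 4 * Cw * M ^ 2 * Δt ^ 2 := by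
      intro x y
      have harg : χ Δt x - χ Δt y = (x - y) + Δt • (v x - v y) := by
        rw [hχ, hχ, smul_sub]; abel
      have ht := entropy_aux_taylor hW hCw2 (x - y) (Δt • (v x - v y))
      have he : fderiv ℝ W (x - y) (Δt • (v x - v y))
          = Δt * fderiv ℝ W (x - y) (v x - v y) := by rw [_root_.map_smul]; simp
      have hnv : ‖v x - v y‖ ≤ 2 * M :=
        le_trans (norm_sub_le _ _) (by linarith [hMv x, hMv y])
      rw [harg]
      calc |W ((x - y) + Δt • (v x - v y)) - W (x - y)
            - Δt * fderiv ℝ W (x - y) (v x - v y)|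
          = ‖W ((x - y) + Δt • (v x - v y)) - W (x - y)
            - fderiv ℝ W (x - y) (Δt • (v x - v y))‖ := by
            rw [he, Real.norm_eq_abs]
        _ ≤ Cw * ‖Δt • (v x - v y)‖ ^ 2 := ht
        _ = Cw * (Δt ^ 2 * ‖v x - v y‖ ^ 2) := by
            rw [norm_smul, mul_pow, Real.norm_eq_abs, sq_abs]
        _ ≤ Cw * (Δt ^ 2 * (2 * M) ^ 2) := by
            have h2 : ‖v x - v y‖ ^ 2 ≤ (2 * M) ^ 2 :=
              pow_le_pow_left₀ (norm_nonneg _) hnv 2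
            gcongr
        _ = 4 * Cw * M ^ 2 * Δt ^ 2 := by ring
    -- integrability with the convenient lambda shapes
    have iAA : Integrable (fun x => V (χ Δt x) - V x) μ := iA.sub iA0
    have iDtL1 : Integrable (fun x => Δt * fderiv ℝ V x (v x)) μ := iL1.const_mul Δt
    have iR1 : Integrable (fun x => V (χ Δt x) - V x - Δt * fderiv ℝ V x (v x)) μ :=
      iAA.sub iDtL1
    have iBhalf : Integrable (fun x => (1/2) * ∫ y, W (χ Δt x - χ Δt y) ∂μ) μ :=
      iB.const_mul (1/2)
    have iB0half : Integrable (fun x => (1/2) * ∫ y, W (x - y) ∂μ) μ :=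
      iB0.const_mul (1/2)
    -- splitting of the entropy values
    have hSplit : S Δt = (∫ x, V (χ Δt x) ∂μ)
        + (1/2) * ∫ x, (∫ y, W (χ Δt x - χ Δt y) ∂μ) ∂μ := by
      have e1 : ∫ x, (V (χ Δt x) + (1/2) * ∫ y, W (χ Δt x - χ Δt y) ∂μ) ∂μ
          = (∫ x, V (χ Δt x) ∂μ) + ∫ x, (1/2) * (∫ y, W (χ Δt x - χ Δt y) ∂μ) ∂μ :=
        integral_add iA iBhalf
      have e2 : ∫ x, (1/2) * (∫ y, W (χ Δt x - χ Δt y) ∂μ) ∂μ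
          = (1/2) * ∫ x, (∫ y, W (χ Δt x - χ Δt y) ∂μ) ∂μ := integral_const_mul _ _
      rw [key Δt, e1, e2]
    have hSplit0 : S 0 = (∫ x, V x ∂μ) + (1/2) * ∫ x, (∫ y, W (x - y) ∂μ) ∂μ := by
      have e1 : ∫ x, (V x + (1/2) * ∫ y, W (x - y) ∂μ) ∂μ
          = (∫ x, V x ∂μ) + ∫ x, (1/2) * (∫ y, W (x - y) ∂μ) ∂μ :=
        integral_add iA0 iB0half
      have e2 : ∫ x, (1/2) * (∫ y, W (x - y) ∂μ) ∂μ
          = (1/2) * ∫ x, (∫ y, W (x - y) ∂μ) ∂μ := integral_const_mul _ _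
      rw [keyzero, e1, e2]
    -- the first remainder
    have hR1int : ∫ x, (V (χ Δt x) - V x - Δt * fderiv ℝ V x (v x)) ∂μ
        = (∫ x, V (χ Δt x) ∂μ) - (∫ x, V x ∂μ) - Δt * ∫ x, fderiv ℝ V x (v x) ∂μ := by
      have e1 : ∫ x, (V (χ Δt x) - V x - Δt * fderiv ℝ V x (v x)) ∂μ
          = (∫ x, (V (χ Δt x) - V x) ∂μ) - ∫ x, Δt * fderiv ℝ V x (v x) ∂μ :=
        integral_sub iAA iDtL1
      have e2 : ∫ x, (V (χ Δt x) - V x) ∂μ = (∫ x, V (χ Δt x) ∂μ) - ∫ x, V x ∂μ :=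
        integral_sub iA iA0
      have e3 : ∫ x, Δt * fderiv ℝ V x (v x) ∂μ = Δt * ∫ x, fderiv ℝ V x (v x) ∂μ :=
        integral_const_mul _ _
      rw [e1, e2, e3]
    have hR1intbd : ‖∫ x, (V (χ Δt x) - V x - Δt * fderiv ℝ V x (v x)) ∂μ‖
        ≤ Cv * M ^ 2 * Δt ^ 2 * U := by
      calc ‖∫ x, (V (χ Δt x) - V x - Δt * fderiv ℝ V x (v x)) ∂μ‖
          ≤ ∫ x, ‖V (χ Δt x) - V x - Δt * fderiv ℝ V x (v x)‖ ∂μ :=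
            norm_integral_le_integral_norm _
        _ ≤ ∫ _x, Cv * M ^ 2 * Δt ^ 2 ∂μ :=
            integral_mono iR1.norm (integrable_const _)
              (fun x => by rw [Real.norm_eq_abs]; exact hR1b x)
        _ = Cv * M ^ 2 * Δt ^ 2 * U := by rw [integral_const, smul_eq_mul, mul_comm]; rfl
    -- the second remainder
    have iyWW : ∀ x, Integrable (fun y => W (χ Δt x - χ Δt y) - W (x - y)) μ := fun x =>
      (iyW x).sub (iyW0 x)
    have iyDtL2 : ∀ x, Integrable (fun y => Δt * fderiv ℝ W (x - y) (v x - v y)) μ :=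
      fun x => (iyL2 x).const_mul Δt
    have iyR2 : ∀ x, Integrable (fun y => W (χ Δt x - χ Δt y) - W (x - y)
        - Δt * fderiv ℝ W (x - y) (v x - v y)) μ := fun x => (iyWW x).sub (iyDtL2 x)
    have hinner2 : ∀ x, ∫ y, (W (χ Δt x - χ Δt y) - W (x - y)
          - Δt * fderiv ℝ W (x - y) (v x - v y)) ∂μ
        = (∫ y, W (χ Δt x - χ Δt y) ∂μ) - (∫ y, W (x - y) ∂μ)
          - Δt * ∫ y, fderiv ℝ W (x - y) (v x - v y) ∂μ := by
      intro x
      have e1 : ∫ y, (W (χ Δt x - χ Δt y) - W (x - y)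
            - Δt * fderiv ℝ W (x - y) (v x - v y)) ∂μ
          = (∫ y, (W (χ Δt x - χ Δt y) - W (x - y)) ∂μ)
            - ∫ y, Δt * fderiv ℝ W (x - y) (v x - v y) ∂μ :=
        integral_sub (iyWW x) (iyDtL2 x)
      have e2 : ∫ y, (W (χ Δt x - χ Δt y) - W (x - y)) ∂μ
          = (∫ y, W (χ Δt x - χ Δt y) ∂μ) - ∫ y, W (x - y) ∂μ :=
        integral_sub (iyW x) (iyW0 x)
      have e3 : ∫ y, Δt * fderiv ℝ W (x - y) (v x - v y) ∂μ
          = Δt * ∫ y, fderiv ℝ W (x - y) (v x - v y) ∂μ := integral_const_mul _ _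
      rw [e1, e2, e3]
    have hFneq : (fun x => ∫ y, (W (χ Δt x - χ Δt y) - W (x - y)
          - Δt * fderiv ℝ W (x - y) (v x - v y)) ∂μ)
        = fun x => (∫ y, W (χ Δt x - χ Δt y) ∂μ) - (∫ y, W (x - y) ∂μ)
          - Δt * ∫ y, fderiv ℝ W (x - y) (v x - v y) ∂μ := funext hinner2
    have iBB : Integrable (fun x => (∫ y, W (χ Δt x - χ Δt y) ∂μ)
        - ∫ y, W (x - y) ∂μ) μ := iB.sub iB0
    have iDtL2 : Integrable (fun x => Δt * ∫ y, fderiv ℝ W (x - y) (v x - v y) ∂μ) μ :=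
      iL2.const_mul Δt
    have iFn : Integrable (fun x => ∫ y, (W (χ Δt x - χ Δt y) - W (x - y)
        - Δt * fderiv ℝ W (x - y) (v x - v y)) ∂μ) μ := by
      rw [hFneq]
      exact iBB.sub iDtL2
    have hFnbd : ∀ x, ‖∫ y, (W (χ Δt x - χ Δt y) - W (x - y)
        - Δt * fderiv ℝ W (x - y) (v x - v y)) ∂μ‖ ≤ 4 * Cw * M ^ 2 * Δt ^ 2 * U := by
      intro x
      calc ‖∫ y, (W (χ Δt x - χ Δt y) - W (x - y)
            - Δt * fderiv ℝ W (x - y) (v x - v y)) ∂μ‖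
          ≤ ∫ y, ‖W (χ Δt x - χ Δt y) - W (x - y)
            - Δt * fderiv ℝ W (x - y) (v x - v y)‖ ∂μ := norm_integral_le_integral_norm _
        _ ≤ ∫ _y, 4 * Cw * M ^ 2 * Δt ^ 2 ∂μ :=
            integral_mono (iyR2 x).norm (integrable_const _)
              (fun y => by rw [Real.norm_eq_abs]; exact hR2b x y)
        _ = 4 * Cw * M ^ 2 * Δt ^ 2 * U := by rw [integral_const, smul_eq_mul, mul_comm]; rfl
    have hFnint_eq : ∫ x, (∫ y, (W (χ Δt x - χ Δt y) - W (x - y)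
          - Δt * fderiv ℝ W (x - y) (v x - v y)) ∂μ) ∂μ
        = (∫ x, (∫ y, W (χ Δt x - χ Δt y) ∂μ) ∂μ) - (∫ x, (∫ y, W (x - y) ∂μ) ∂μ)
          - Δt * ∫ x, (∫ y, fderiv ℝ W (x - y) (v x - v y) ∂μ) ∂μ := by
      have e1 : ∫ x, ((∫ y, W (χ Δt x - χ Δt y) ∂μ) - (∫ y, W (x - y) ∂μ)
            - Δt * ∫ y, fderiv ℝ W (x - y) (v x - v y) ∂μ) ∂μ
          = (∫ x, ((∫ y, W (χ Δt x - χ Δt y) ∂μ) - ∫ y, W (x - y) ∂μ) ∂μ)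
            - ∫ x, Δt * ∫ y, fderiv ℝ W (x - y) (v x - v y) ∂μ ∂μ :=
        integral_sub iBB iDtL2
      have e2 : ∫ x, ((∫ y, W (χ Δt x - χ Δt y) ∂μ) - ∫ y, W (x - y) ∂μ) ∂μ
          = (∫ x, (∫ y, W (χ Δt x - χ Δt y) ∂μ) ∂μ) - ∫ x, (∫ y, W (x - y) ∂μ) ∂μ :=
        integral_sub iB iB0
      have e3 : ∫ x, Δt * ∫ y, fderiv ℝ W (x - y) (v x - v y) ∂μ ∂μ
          = Δt * ∫ x, (∫ y, fderiv ℝ W (x - y) (v x - v y) ∂μ) ∂μ := integral_const_mul _ _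
      calc ∫ x, (∫ y, (W (χ Δt x - χ Δt y) - W (x - y)
            - Δt * fderiv ℝ W (x - y) (v x - v y)) ∂μ) ∂μ
          = ∫ x, ((∫ y, W (χ Δt x - χ Δt y) ∂μ) - (∫ y, W (x - y) ∂μ)
            - Δt * ∫ y, fderiv ℝ W (x - y) (v x - v y) ∂μ) ∂μ := by rw [hFneq]
        _ = _ := by rw [e1, e2, e3]
    have hFnintbd : ‖∫ x, (∫ y, (W (χ Δt x - χ Δt y) - W (x - y)
          - Δt * fderiv ℝ W (x - y) (v x - v y)) ∂μ) ∂μ‖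
        ≤ 4 * Cw * M ^ 2 * Δt ^ 2 * U * U := by
      calc ‖∫ x, (∫ y, (W (χ Δt x - χ Δt y) - W (x - y)
            - Δt * fderiv ℝ W (x - y) (v x - v y)) ∂μ) ∂μ‖
          ≤ ∫ x, ‖∫ y, (W (χ Δt x - χ Δt y) - W (x - y)
            - Δt * fderiv ℝ W (x - y) (v x - v y)) ∂μ‖ ∂μ := norm_integral_le_integral_norm _
        _ ≤ ∫ _x, 4 * Cw * M ^ 2 * Δt ^ 2 * U ∂μ :=
            integral_mono iFn.norm (integrable_const _) (fun x => hFnbd x)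
        _ = 4 * Cw * M ^ 2 * Δt ^ 2 * U * U := by rw [integral_const, smul_eq_mul, mul_comm]; rfl
    -- the exact identity for the error
    have hfinal : S Δt - S 0 - Δt * ∫ x, ‖v x‖ ^ 2 ∂μ
        = (∫ x, (V (χ Δt x) - V x - Δt * fderiv ℝ V x (v x)) ∂μ)
          + (1/2) * ∫ x, (∫ y, (W (χ Δt x - χ Δt y) - W (x - y)
            - Δt * fderiv ℝ W (x - y) (v x - v y)) ∂μ) ∂μ := by
      rw [hSplit, hSplit0, hI, hR1int, hFnint_eq, hL2I]
      ring
    rw [hfinal]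
    calc ‖(∫ x, (V (χ Δt x) - V x - Δt * fderiv ℝ V x (v x)) ∂μ)
          + (1/2) * ∫ x, (∫ y, (W (χ Δt x - χ Δt y) - W (x - y)
            - Δt * fderiv ℝ W (x - y) (v x - v y)) ∂μ) ∂μ‖
        ≤ ‖∫ x, (V (χ Δt x) - V x - Δt * fderiv ℝ V x (v x)) ∂μ‖
          + (1/2) * ‖∫ x, (∫ y, (W (χ Δt x - χ Δt y) - W (x - y)
            - Δt * fderiv ℝ W (x - y) (v x - v y)) ∂μ) ∂μ‖ := by
          refine le_trans (norm_add_le _ _) (add_le_add_right (le_of_eq ?_) _)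
          have h12 : ‖(1/2 : ℝ)‖ = (1/2 : ℝ) := by
            rw [Real.norm_eq_abs]; norm_num
          rw [norm_mul, h12]
      _ ≤ Cv * M ^ 2 * Δt ^ 2 * U + (1/2) * (4 * Cw * M ^ 2 * Δt ^ 2 * U * U) := by
          gcongr
      _ = (Cv * M ^ 2 * U + 2 * Cw * M ^ 2 * U ^ 2) * Δt ^ 2 := by ring
  -- conclude the big-O statement
  refine Asymptotics.IsBigO.of_bound (Cv * M ^ 2 * U + 2 * Cw * M ^ 2 * U ^ 2)
    (Filter.Eventually.of_forall fun Δt => ?_)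
  rw [Real.norm_eq_abs (Δt ^ 2), abs_of_nonneg (sq_nonneg Δt)]
  exact main Δt
end

section
/- Let {x_i}_{i∈J} ⊆ ℝ^d be finitely many pairwise distinct points, let V, W ∈ C¹(ℝ^d; ℝ) with W(−ξ) = W(ξ) for all ξ, and define v(x) := ∇V(x) + Σ_{j ∈ J, x_j ≠ x} ∇W(x − x_j). For Δt ∈ ℝ define the updated positions x_i(Δt) := x_i + Δt·v(x_i) and the entropy S(Δt) := Σ_{i∈J} V(x_i(Δt)) + ½ Σ_{i∈J} Σ_{j∈J, j≠i} W(x_i(Δt) − x_j(Δt)). Then S is differentiable at Δt = 0 and S'(0) = Σ_{i∈J} |v(x_i)|² ≥ 0; hence S(Δt) = S(0) + Δt Σ_{i∈J} |v(x_i)|² + o(Δt), so up to higher-order terms the time-discrete entropy does not decrease. -/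
open MeasureTheory
open scoped Classical RealInnerProductSpace

variable {d : ℕ}

lemma key_deriv (f : EuclideanSpace ℝ (Fin d) → ℝ) (hf : ContDiff ℝ 1 f)
    (p c : EuclideanSpace ℝ (Fin d)) :
    HasDerivAt (fun t : ℝ => f (p + t • c)) ⟪gradient f p, c⟫ 0 := by
  have h1 : HasDerivAt (fun t : ℝ => p + t • c) c 0 := by
    simpa using ((hasDerivAt_id (0:ℝ)).smul_const c).const_add p
  have h2 : HasFDerivAt f (fderiv ℝ f p) ((fun t : ℝ => p + t • c) 0) := by
    simpa using (hf.differentiable one_ne_zero p).hasFDerivAt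
  have h3 := h2.comp_hasDerivAt 0 h1
  have : fderiv ℝ f p c = ⟪gradient f p, c⟫ := by
    rw [gradient, InnerProductSpace.toDual_symm_apply]
  rw [← this]
  exact h3

lemma grad_odd (W : EuclideanSpace ℝ (Fin d) → ℝ) (hW : ContDiff ℝ 1 W)
    (hWsymm : ∀ ξ, W (-ξ) = W ξ) (ξ : EuclideanSpace ℝ (Fin d)) :
    gradient W (-ξ) = - gradient W ξ := by
  have hneg : HasFDerivAt (fun y : EuclideanSpace ℝ (Fin d) => -y)
      (-(ContinuousLinearMap.id ℝ _)) ξ := by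
    simpa using (hasFDerivAt_id ξ).fun_neg
  have h2 : HasFDerivAt W (fderiv ℝ W (-ξ)) (-ξ) :=
    (hW.differentiable one_ne_zero _).hasFDerivAt
  have h3 : HasFDerivAt W ((fderiv ℝ W (-ξ)).comp (-(ContinuousLinearMap.id ℝ _))) ξ := by
    have := h2.comp ξ hneg
    have hfun : (W ∘ fun y : EuclideanSpace ℝ (Fin d) => -y) = W := by
      funext y; exact hWsymm y
    rwa [hfun] at this
  have h4 : fderiv ℝ W ξ = (fderiv ℝ W (-ξ)).comp (-(ContinuousLinearMap.id ℝ _)) :=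
    h3.fderiv
  apply ext_inner_right ℝ
  intro u
  have e1 : ⟪gradient W (-ξ), u⟫ = fderiv ℝ W (-ξ) u := by
    rw [gradient, InnerProductSpace.toDual_symm_apply]
  have e2 : ⟪gradient W ξ, u⟫ = fderiv ℝ W ξ u := by
    rw [gradient, InnerProductSpace.toDual_symm_apply]
  rw [e1, inner_neg_left, e2, h4]
  simp

/-- **Discrete-in-time entropy inequality for a discrete mass measure.**
Finitely many pairwise distinct points `x_i ∈ ℝ^d`, potentials `V, W ∈ C¹` with `W`
even, velocity `v(p) = ∇V(p) + Σ_{j : x_j ≠ p} ∇W(p − x_j)`, updated positions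
`x_i(Δt) = x_i + Δt·v(x_i)`, and entropy
`S(Δt) = Σ_i V(x_i(Δt)) + ½ Σ_i Σ_{j ≠ i} W(x_i(Δt) − x_j(Δt))`.  Then `S` is
differentiable at `Δt = 0` with `S'(0) = Σ_i |v(x_i)|² ≥ 0`. -/
theorem discrete_time_entropy_inequality_diracs {d : ℕ} {ι : Type*} [Fintype ι]
    (x : ι → EuclideanSpace ℝ (Fin d)) (hx : Function.Injective x)
    (V W : EuclideanSpace ℝ (Fin d) → ℝ)
    (hV : ContDiff ℝ 1 V) (hW : ContDiff ℝ 1 W)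
    (hWsymm : ∀ ξ, W (-ξ) = W ξ)
    (v : EuclideanSpace ℝ (Fin d) → EuclideanSpace ℝ (Fin d))
    (hv : ∀ p, v p = gradient V p +
      ∑ j ∈ Finset.univ.filter (fun j => x j ≠ p), gradient W (p - x j))
    (S : ℝ → ℝ)
    (hS : ∀ Δt, S Δt = (∑ i, V (x i + Δt • v (x i))) +
      (1/2) * ∑ i, ∑ j ∈ Finset.univ.erase i,
        W ((x i + Δt • v (x i)) - (x j + Δt • v (x j)))) :
    HasDerivAt S (∑ i, ‖v (x i)‖ ^ 2) 0 ∧ 0 ≤ ∑ i, ‖v (x i)‖ ^ 2 := by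
  have hpos : (0:ℝ) ≤ ∑ i, ‖v (x i)‖ ^ 2 :=
    Finset.sum_nonneg fun i _ => by positivity
  refine ⟨?_, hpos⟩
  -- rewrite S
  have hSeq : S = fun Δt => (∑ i, V (x i + Δt • v (x i))) +
      (1/2) * ∑ i, ∑ j ∈ Finset.univ.erase i,
        W ((x i + Δt • v (x i)) - (x j + Δt • v (x j))) := funext hS
  -- derivative of each V-term
  have hVderiv : ∀ i : ι, HasDerivAt (fun t : ℝ => V (x i + t • v (x i)))
      ⟪gradient V (x i), v (x i)⟫ 0 := fun i => key_deriv V hV _ _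
  -- derivative of each W-term
  have hWderiv : ∀ i j : ι, HasDerivAt
      (fun t : ℝ => W ((x i + t • v (x i)) - (x j + t • v (x j))))
      ⟪gradient W (x i - x j), v (x i) - v (x j)⟫ 0 := by
    intro i j
    have := key_deriv W hW (x i - x j) (v (x i) - v (x j))
    have e : ∀ t : ℝ, x i + t • v (x i) - (x j + t • v (x j))
        = x i - x j + t • (v (x i) - v (x j)) := by
      intro t; rw [smul_sub]; abel
    simpa only [e] using this
  have hD : HasDerivAt S
      ((∑ i, ⟪gradient V (x i), v (x i)⟫) +
        (1/2) * ∑ i, ∑ j ∈ Finset.univ.erase i,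
          ⟪gradient W (x i - x j), v (x i) - v (x j)⟫) 0 := by
    rw [hSeq]
    exact (HasDerivAt.fun_sum fun i _ => hVderiv i).add
      (((HasDerivAt.fun_sum fun i _ => HasDerivAt.fun_sum fun j _ => hWderiv i j)).const_mul (1/2))
  convert hD using 1
  -- algebra: show sum of norms equals the derivative expression
  have hodd : ∀ ξ, gradient W (-ξ) = - gradient W ξ := grad_odd W hW hWsymm
  -- filter = erase
  have hfe : ∀ i : ι, Finset.univ.filter (fun j => x j ≠ x i) = Finset.univ.erase i := by
    intro i
    ext j
    simp [Finset.mem_erase, hx.ne_iff]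
  have hvv : ∀ i, v (x i) = gradient V (x i) +
      ∑ j ∈ Finset.univ.erase i, gradient W (x i - x j) := by
    intro i; rw [hv (x i), hfe i]
  -- split the double sum
  have hswap : ∑ i, ∑ j ∈ Finset.univ.erase i, ⟪gradient W (x i - x j), v (x j)⟫
      = - ∑ i, ∑ j ∈ Finset.univ.erase i, ⟪gradient W (x i - x j), v (x i)⟫ := by
    rw [Finset.sum_comm' (s' := fun j => Finset.univ.erase j) (t' := Finset.univ)
      (fun i j => by simp [ne_comm])]
    rw [← Finset.sum_neg_distrib]
    refine Finset.sum_congr rfl fun j _ => ?_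
    rw [← Finset.sum_neg_distrib]
    refine Finset.sum_congr rfl fun i _ => ?_
    have : x j - x i = -(x i - x j) := by abel
    rw [this, hodd, inner_neg_left, neg_neg]
  have expand : ∑ i, ∑ j ∈ Finset.univ.erase i,
      ⟪gradient W (x i - x j), v (x i) - v (x j)⟫
      = 2 * ∑ i, ∑ j ∈ Finset.univ.erase i, ⟪gradient W (x i - x j), v (x i)⟫ := by
    have : ∀ i j : ι, ⟪gradient W (x i - x j), v (x i) - v (x j)⟫
        = ⟪gradient W (x i - x j), v (x i)⟫ - ⟪gradient W (x i - x j), v (x j)⟫ :=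
      fun i j => inner_sub_right _ _ _
    simp_rw [this, Finset.sum_sub_distrib, hswap]
    ring
  rw [expand]
  have : ∀ i : ι, ‖v (x i)‖^2 = ⟪gradient V (x i), v (x i)⟫ +
      ∑ j ∈ Finset.univ.erase i, ⟪gradient W (x i - x j), v (x i)⟫ := by
    intro i
    rw [← real_inner_self_eq_norm_sq]
    nth_rewrite 1 [hvv i]
    rw [inner_add_left, sum_inner]
  simp_rw [this, Finset.sum_add_distrib]
  ring
end

section
/- Let ν ∈ ℕ and for α ∈ {1,…,ν} let μ^α be finite, compactly supported, nonnegative measures on ℝ^d that are absolutely continuous with respect to Lebesgue measure with bounded densities. Let V^α ∈ C²(ℝ^d; ℝ), and for α, β ∈ {1,…,ν} let W^α_β ∈ C²(ℝ^d; ℝ) with bounded first and second derivatives, satisfying W^α_β(−ξ) = W^α_β(ξ) for all ξ and the symmetric-interaction condition W^α_β = W^β_α. Define v^α(x) := ∇V^α(x) + Σ_{β=1}^{ν} (∇W^α_β ⋆ μ^β)(x), for Δt > 0 set χ^α_Δt(x) := x + Δt·v^α(x) and μ^α_Δt := χ^α_Δt#μ^α, and define the entropy S(Δt) := Σ_{α=1}^{ν}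 ∫ ( V^α + ½ Σ_{β=1}^{ν} W^α_β ⋆ μ^β_Δt ) dμ^α_Δt. Then S(Δt) = S(0) + Δt Σ_{α=1}^{ν} ∫ |v^α|² dμ^α + O(Δt²) as Δt → 0⁺; in particular, up to O(Δt²)-terms, S(Δt) ≥ S(0). -/
open MeasureTheory Topology Asymptotics
open scoped ENNReal RealInnerProductSpace


open MeasureTheory Topology Asymptotics
open scoped ENNReal RealInnerProductSpace

section Aux
variable {E : Type*} [NormedAddCommGroup E] [InnerProductSpace ℝ E] [CompleteSpace E]

lemma aux_inner_gradient (f : E → ℝ) (x y : E) :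
    ⟪gradient f x, y⟫ = fderiv ℝ f x y := by
  rw [gradient]; exact InnerProductSpace.toDual_symm_apply

lemma aux_lip {F : Type*} [NormedAddCommGroup F] [NormedSpace ℝ F]
    {f : E → F} (hf : Differentiable ℝ f) {C : ℝ}
    (hC : ∀ x, ‖fderiv ℝ f x‖ ≤ C) (a b : E) : ‖f a - f b‖ ≤ C * ‖a - b‖ := by
  exact Convex.norm_image_sub_le_of_norm_fderiv_le
    (fun x _ => hf.differentiableAt) (fun x _ => hC x) convex_univ trivial trivial

lemma aux_fderiv_lip {f : E → ℝ} (hf : ContDiff ℝ 2 f) {C : ℝ}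
    (hC : ∀ x, ‖fderiv ℝ (fderiv ℝ f) x‖ ≤ C) (a b : E) :
    ‖fderiv ℝ f a - fderiv ℝ f b‖ ≤ C * ‖a - b‖ :=
  aux_lip ((hf.fderiv_right (m := 1) (by norm_num)).differentiable one_ne_zero) hC a b

lemma aux_taylor {f : E → ℝ} (hf : ContDiff ℝ 2 f) {C : ℝ}
    (hC : ∀ x, ‖fderiv ℝ (fderiv ℝ f) x‖ ≤ C) (a h : E) :
    |f (a + h) - f a - fderiv ℝ f a h| ≤ C * ‖h‖ ^ 2 := by
  have hd : Differentiable ℝ f := hf.differentiable two_ne_zero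
  set g : E → ℝ := fun u => f (a + u) - fderiv ℝ f a u with hg
  have hgd : ∀ u : E, HasFDerivAt g (fderiv ℝ f (a + u) - fderiv ℝ f a) u := by
    intro u
    have h1 : HasFDerivAt (fun u : E => f (a + u)) (fderiv ℝ f (a + u)) u := by
      have := (hd (a + u)).hasFDerivAt.comp u ((hasFDerivAt_id u).const_add a)
      simpa [Function.comp_def] using this
    exact h1.sub ((fderiv ℝ f a).hasFDerivAt)
  have key : ‖g h - g 0‖ ≤ (C * ‖h‖) * ‖h - 0‖ := by
    apply Convex.norm_image_sub_le_of_norm_hasFDerivWithin_le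
      (fun u _ => (hgd u).hasFDerivWithinAt) _ (convex_closedBall (0:E) ‖h‖)
      (Metric.mem_closedBall_self (norm_nonneg h))
      (by simpa [Metric.mem_closedBall, dist_eq_norm] using le_refl ‖h‖)
    intro u hu
    calc ‖fderiv ℝ f (a + u) - fderiv ℝ f a‖ ≤ C * ‖(a + u) - a‖ :=
          aux_fderiv_lip hf hC _ _
      _ = C * ‖u‖ := by congr 1; simp
      _ ≤ C * ‖h‖ := by
          have hC0 : 0 ≤ C := le_trans (norm_nonneg (fderiv ℝ (fderiv ℝ f) 0)) (hC 0)
          have : ‖u‖ ≤ ‖h‖ := by simpa [Metric.mem_closedBall, dist_eq_norm] using hu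
          exact mul_le_mul_of_nonneg_left this hC0
  have : g h - g 0 = f (a + h) - f a - fderiv ℝ f a h := by simp [hg]; ring
  rw [this] at key
  calc |f (a + h) - f a - fderiv ℝ f a h| ≤ (C * ‖h‖) * ‖h - 0‖ := key
    _ = C * ‖h‖ ^ 2 := by rw [sub_zero]; ring

lemma aux_fderiv_even {f : E → ℝ} (hf : Differentiable ℝ f)
    (heven : ∀ ξ, f (-ξ) = f ξ) (ξ : E) :
    fderiv ℝ f (-ξ) = -fderiv ℝ f ξ := by
  have h1 : HasFDerivAt (fun x : E => f (-x))
      ((fderiv ℝ f (-ξ)).comp (-(ContinuousLinearMap.id ℝ E))) ξ := by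
    have := (hf (-ξ)).hasFDerivAt.comp ξ ((hasFDerivAt_id ξ).neg)
    simpa [Function.comp_def] using this
  have h2 : (fun x : E => f (-x)) = f := funext heven
  rw [h2] at h1
  have h3 : fderiv ℝ f ξ = (fderiv ℝ f (-ξ)).comp (-(ContinuousLinearMap.id ℝ E)) :=
    h1.fderiv
  ext u
  have := congrArg (fun L : E →L[ℝ] ℝ => L (-u)) h3
  simpa using this.symm

lemma aux_gradient_even {f : E → ℝ} (hf : Differentiable ℝ f)
    (heven : ∀ ξ, f (-ξ) = f ξ) (ξ : E) :
    gradient f (-ξ) = -gradient f ξ := by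
  rw [gradient, gradient, aux_fderiv_even hf heven, map_neg]

lemma aux_norm_gradient (f : E → ℝ) (x : E) : ‖gradient f x‖ = ‖fderiv ℝ f x‖ := by
  rw [gradient]; exact LinearIsometryEquiv.norm_map _ _

lemma aux_gradient_sub (f : E → ℝ) (x y : E) :
    gradient f x - gradient f y
      = (InnerProductSpace.toDual ℝ E).symm (fderiv ℝ f x - fderiv ℝ f y) := by
  rw [gradient, gradient, map_sub]

end Aux

lemma aux_continuous_of_bound {E F : Type*} [NormedAddCommGroup E] [NormedAddCommGroup F]
    {f : E → F} {C : ℝ} (hC : 0 ≤ C)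
    (h : ∀ a b, ‖f a - f b‖ ≤ C * ‖a - b‖) : Continuous f := by
  have : LipschitzWith (Real.toNNReal C) f := by
    apply LipschitzWith.of_dist_le_mul
    intro a b
    rw [dist_eq_norm, dist_eq_norm]
    calc ‖f a - f b‖ ≤ C * ‖a - b‖ := h a b
      _ = (Real.toNNReal C) * ‖a - b‖ := by rw [Real.coe_toNNReal C hC]
  exact this.continuous


open MeasureTheory Topology
open scoped ENNReal RealInnerProductSpace

section Aux2
variable {X : Type*} [MeasurableSpace X] [TopologicalSpace X] [BorelSpace X]
  [T2Space X] {F : Type*} [NormedAddCommGroup F]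

lemma aux_ae_mem {μ : Measure X} {K : Set X} (hμK : μ Kᶜ = 0) : ∀ᵐ x ∂μ, x ∈ K := by
  rw [ae_iff]; exact hμK

lemma aux_integrable_compact {g : X → F} (hg : Continuous g) (μ : Measure X)
    [IsFiniteMeasure μ] {K : Set X} (hK : IsCompact K) (hμK : μ Kᶜ = 0) :
    Integrable g μ := by
  rw [← Measure.restrict_eq_self_of_ae_mem (aux_ae_mem hμK)]
  exact hg.continuousOn.integrableOn_compact hK

lemma aux_norm_integral_le {μ : Measure X} [IsFiniteMeasure μ] {K : Set X}
    (hμK : μ Kᶜ = 0) {f : X → ℝ} {c : ℝ} (hbd : ∀ x ∈ K, |f x| ≤ c) :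
    |∫ x, f x ∂μ| ≤ (μ Set.univ).toReal * c := by
  have h1 : ‖∫ x, f x ∂μ‖ ≤ ∫ _x, c ∂μ := by
    apply norm_integral_le_of_norm_le (integrable_const c)
    filter_upwards [aux_ae_mem hμK] with x hx
    simpa [Real.norm_eq_abs] using hbd x hx
  simpa [integral_const, smul_eq_mul, Real.norm_eq_abs, measureReal_def] using h1

end Aux2

section Aux3
variable {E : Type*} [NormedAddCommGroup E] [InnerProductSpace ℝ E]
  [MeasurableSpace E] [BorelSpace E] [SecondCountableTopology E]

/-- continuity of `z ↦ ∫ W (z - c y) dμ` for Lipschitz `W` and compactly supported `μ`. -/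
lemma aux_conv_cont1 {W : E → ℝ} {C : ℝ} (hWc : Continuous W)
    (hlip : ∀ a b, |W a - W b| ≤ C * ‖a - b‖) {c : E → E} (hc : Continuous c)
    (μ : Measure E) [IsFiniteMeasure μ] {K : Set E} (hK : IsCompact K)
    (hμK : μ Kᶜ = 0) : Continuous fun z => ∫ y, W (z - c y) ∂μ := by
  apply aux_continuous_of_bound (C := (μ Set.univ).toReal * max C 0)
    (mul_nonneg ENNReal.toReal_nonneg (le_max_right _ _))
  intro a b
  have hint : ∀ z : E, Integrable (fun y => W (z - c y)) μ := fun z =>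
    aux_integrable_compact (hWc.comp (continuous_const.sub hc)) μ hK hμK
  rw [← integral_sub (hint a) (hint b)]
  have h1 : ‖∫ y, (W (a - c y) - W (b - c y)) ∂μ‖ ≤ ∫ _y, max C 0 * ‖a - b‖ ∂μ := by
    apply norm_integral_le_of_norm_le (integrable_const _)
    apply Filter.Eventually.of_forall
    intro y
    calc ‖W (a - c y) - W (b - c y)‖ ≤ C * ‖(a - c y) - (b - c y)‖ := hlip _ _
      _ = C * ‖a - b‖ := by congr 1; congr 1; abel
      _ ≤ max C 0 * ‖a - b‖ := mul_le_mul_of_nonneg_right (le_max_left _ _) (norm_nonneg _)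
  rw [integral_const, smul_eq_mul] at h1
  calc ‖_‖ ≤ (μ Set.univ).toReal * (max C 0 * ‖a - b‖) := h1
    _ = (μ Set.univ).toReal * max C 0 * ‖a - b‖ := by ring

/-- continuity of `x ↦ ∫ g (x - y) dμ` for bounded Lipschitz `g`. -/
lemma aux_conv_cont2 {F : Type*} [NormedAddCommGroup F] [NormedSpace ℝ F]
    {g : E → F} (hgc : Continuous g) {C D : ℝ} (hD : ∀ z, ‖g z‖ ≤ D)
    (hlip : ∀ a b, ‖g a - g b‖ ≤ C * ‖a - b‖)
    (μ : Measure E) [IsFiniteMeasure μ] :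
    Continuous fun x => ∫ y, g (x - y) ∂μ := by
  apply aux_continuous_of_bound (C := (μ Set.univ).toReal * max C 0)
    (mul_nonneg ENNReal.toReal_nonneg (le_max_right _ _))
  intro a b
  have hint : ∀ z : E, Integrable (fun y => g (z - y)) μ := fun z =>
    Integrable.mono' (integrable_const D)
      ((hgc.comp (continuous_const.sub continuous_id)).aestronglyMeasurable)
      (Filter.Eventually.of_forall fun y => hD _)
  rw [← integral_sub (hint a) (hint b)]
  have h1 : ‖∫ y, (g (a - y) - g (b - y)) ∂μ‖ ≤ ∫ _y, max C 0 * ‖a - b‖ ∂μ := by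
    apply norm_integral_le_of_norm_le (integrable_const _)
    apply Filter.Eventually.of_forall
    intro y
    calc ‖g (a - y) - g (b - y)‖ ≤ C * ‖(a - y) - (b - y)‖ := hlip _ _
      _ = C * ‖a - b‖ := by congr 1; congr 1; abel
      _ ≤ max C 0 * ‖a - b‖ := mul_le_mul_of_nonneg_right (le_max_left _ _) (norm_nonneg _)
  rw [integral_const, smul_eq_mul] at h1
  calc ‖_‖ ≤ (μ Set.univ).toReal * (max C 0 * ‖a - b‖) := h1
    _ = (μ Set.univ).toReal * max C 0 * ‖a - b‖ := by ring

end Aux3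

section Est
variable {E : Type*} [NormedAddCommGroup E] [InnerProductSpace ℝ E] [CompleteSpace E]
  [MeasurableSpace E] [BorelSpace E] [SecondCountableTopology E]

lemma estA (μ : Measure E) [IsFiniteMeasure μ] {K : Set E} (hK : IsCompact K)
    (hμK : μ Kᶜ = 0) {V : E → ℝ} (hV : ContDiff ℝ 2 V) {C : ℝ}
    (hC : ∀ x, ‖fderiv ℝ V x‖ ≤ C ∧ ‖fderiv ℝ (fderiv ℝ V) x‖ ≤ C)
    {v : E → E} (hvc : Continuous v) {M : ℝ} (hM : ∀ x ∈ K, ‖v x‖ ≤ M) (t : ℝ) :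
    |∫ x, V (x + t • v x) ∂μ - ∫ x, V x ∂μ - t * ∫ x, ⟪gradient V x, v x⟫ ∂μ|
      ≤ C * M ^ 2 * (μ Set.univ).toReal * t ^ 2 := by
  have hC0 : 0 ≤ C := le_trans (norm_nonneg _) (hC 0).1
  have hgVc : Continuous (gradient V) :=
    (InnerProductSpace.toDual ℝ E).symm.continuous.comp
      ((hV.fderiv_right (m := 1) (by norm_num)).continuous)
  have hi1 : Integrable (fun x => V (x + t • v x)) μ :=
    aux_integrable_compact (hV.continuous.comp (continuous_id.add (hvc.const_smul t)))
      μ hK hμK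
  have hi2 : Integrable V μ := aux_integrable_compact hV.continuous μ hK hμK
  have hi3 : Integrable (fun x => ⟪gradient V x, v x⟫) μ :=
    aux_integrable_compact (hgVc.inner hvc) μ hK hμK
  have heq : ∫ x, (V (x + t • v x) - V x - t * ⟪gradient V x, v x⟫) ∂μ
      = ∫ x, V (x + t • v x) ∂μ - ∫ x, V x ∂μ - t * ∫ x, ⟪gradient V x, v x⟫ ∂μ := by
    have hi12 : Integrable (fun x => V (x + t • v x) - V x) μ := hi1.sub hi2
    have hi3' : Integrable (fun x => t * ⟪gradient V x, v x⟫) μ := hi3.const_mul t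
    rw [integral_sub hi12 hi3', integral_sub hi1 hi2, integral_const_mul]
  rw [← heq]
  have key : |∫ x, (V (x + t • v x) - V x - t * ⟪gradient V x, v x⟫) ∂μ|
      ≤ (μ Set.univ).toReal * (C * M ^ 2 * t ^ 2) := by
    apply aux_norm_integral_le hμK
    intro x hx
    have h0 := aux_taylor hV (fun z => (hC z).2) x (t • v x)
    have h1 : fderiv ℝ V x (t • v x) = t * ⟪gradient V x, v x⟫ := by
      rw [ContinuousLinearMap.map_smul, smul_eq_mul, aux_inner_gradient]
    rw [h1] at h0
    calc |V (x + t • v x) - V x - t * ⟪gradient V x, v x⟫| ≤ C * ‖t • v x‖ ^ 2 := h0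
      _ = C * (t ^ 2 * ‖v x‖ ^ 2) := by
          rw [norm_smul, mul_pow, Real.norm_eq_abs, sq_abs]
      _ ≤ C * (t ^ 2 * M ^ 2) := by
          have h2 : ‖v x‖ ^ 2 ≤ M ^ 2 := pow_le_pow_left₀ (norm_nonneg _) (hM x hx) 2
          exact mul_le_mul_of_nonneg_left
            (mul_le_mul_of_nonneg_left h2 (sq_nonneg t)) hC0
      _ = C * M ^ 2 * t ^ 2 := by ring
  calc |∫ x, (V (x + t • v x) - V x - t * ⟪gradient V x, v x⟫) ∂μ|
      ≤ (μ Set.univ).toReal * (C * M ^ 2 * t ^ 2) := key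
    _ = C * M ^ 2 * (μ Set.univ).toReal * t ^ 2 := by ring

end Est

section EstB
variable {E : Type*} [NormedAddCommGroup E] [InnerProductSpace ℝ E] [CompleteSpace E]
  [MeasurableSpace E] [BorelSpace E] [SecondCountableTopology E]

lemma estB (μa μb : Measure E) [IsFiniteMeasure μa] [IsFiniteMeasure μb]
    {Ka Kb : Set E} (hKa : IsCompact Ka) (hKb : IsCompact Kb)
    (hμKa : μa Kaᶜ = 0) (hμKb : μb Kbᶜ = 0)
    {W : E → ℝ} (hW : ContDiff ℝ 2 W) {C : ℝ}
    (hC : ∀ x, ‖fderiv ℝ W x‖ ≤ C ∧ ‖fderiv ℝ (fderiv ℝ W) x‖ ≤ C)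
    {va vb : E → E} (hvac : Continuous va) (hvbc : Continuous vb)
    {Ma Mb : ℝ} (hMa : ∀ x ∈ Ka, ‖va x‖ ≤ Ma) (hMb : ∀ y ∈ Kb, ‖vb y‖ ≤ Mb) (t : ℝ) :
    |(∫ x, ∫ y, W ((x + t • va x) - (y + t • vb y)) ∂μb ∂μa)
      - (∫ x, ∫ y, W (x - y) ∂μb ∂μa)
      - t * ∫ x, ∫ y, ⟪gradient W (x - y), va x - vb y⟫ ∂μb ∂μa|
      ≤ C * (Ma + Mb) ^ 2 * (μa Set.univ).toReal * (μb Set.univ).toReal * t ^ 2 := by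
  have hC0 : 0 ≤ C := le_trans (norm_nonneg _) (hC 0).1
  have hWc : Continuous W := hW.continuous
  have hWd : Differentiable ℝ W := hW.differentiable two_ne_zero
  have hWlip : ∀ a b : E, |W a - W b| ≤ C * ‖a - b‖ := fun a b => by
    simpa [Real.norm_eq_abs] using aux_lip hWd (fun x => (hC x).1) a b
  have hgWc : Continuous (gradient W) :=
    (InnerProductSpace.toDual ℝ E).symm.continuous.comp
      ((hW.fderiv_right (m := 1) (by norm_num)).continuous)
  -- inner integrands integrable (for every x)
  have j1 : ∀ x : E, Integrable (fun y => W ((x + t • va x) - (y + t • vb y))) μb :=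
    fun x => aux_integrable_compact
      (hWc.comp (continuous_const.sub (continuous_id.add (hvbc.const_smul t)))) μb hKb hμKb
  have j2 : ∀ x : E, Integrable (fun y => W (x - y)) μb := fun x =>
    aux_integrable_compact (hWc.comp (continuous_const.sub continuous_id)) μb hKb hμKb
  have j3 : ∀ x : E, Integrable (fun y => ⟪gradient W (x - y), va x - vb y⟫) μb :=
    fun x => aux_integrable_compact
      ((hgWc.comp (continuous_const.sub continuous_id)).inner (continuous_const.sub hvbc))
      μb hKb hμKb
  -- pointwise (in x) inner identity
  have hinner : ∀ x : E,
      ∫ y, (W ((x + t • va x) - (y + t • vb y)) - W (x - y)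
          - t * ⟪gradient W (x - y), va x - vb y⟫) ∂μb
        = (∫ y, W ((x + t • va x) - (y + t • vb y)) ∂μb) - (∫ y, W (x - y) ∂μb)
          - t * ∫ y, ⟪gradient W (x - y), va x - vb y⟫ ∂μb := by
    intro x
    have h12 : Integrable (fun y => W ((x + t • va x) - (y + t • vb y)) - W (x - y)) μb :=
      (j1 x).sub (j2 x)
    have h3' : Integrable (fun y => t * ⟪gradient W (x - y), va x - vb y⟫) μb :=
      (j3 x).const_mul t
    rw [integral_sub h12 h3', integral_sub (j1 x) (j2 x), integral_const_mul]
  -- pointwise second-order bound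
  have hpt : ∀ x ∈ Ka, ∀ y ∈ Kb,
      |W ((x + t • va x) - (y + t • vb y)) - W (x - y)
        - t * ⟪gradient W (x - y), va x - vb y⟫| ≤ C * (Ma + Mb) ^ 2 * t ^ 2 := by
    intro x hx y hy
    have harg : (x + t • va x) - (y + t • vb y) = (x - y) + t • (va x - vb y) := by
      rw [smul_sub]; abel
    have h1 : t * ⟪gradient W (x - y), va x - vb y⟫
        = fderiv ℝ W (x - y) (t • (va x - vb y)) := by
      rw [ContinuousLinearMap.map_smul, smul_eq_mul, aux_inner_gradient]
    have h0 := aux_taylor hW (fun z => (hC z).2) (x - y) (t • (va x - vb y))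
    rw [harg, h1]
    have hnrm : ‖va x - vb y‖ ≤ Ma + Mb :=
      le_trans (norm_sub_le _ _) (add_le_add (hMa x hx) (hMb y hy))
    calc |W ((x - y) + t • (va x - vb y)) - W (x - y)
          - fderiv ℝ W (x - y) (t • (va x - vb y))|
        ≤ C * ‖t • (va x - vb y)‖ ^ 2 := h0
      _ = C * (t ^ 2 * ‖va x - vb y‖ ^ 2) := by
          rw [norm_smul, mul_pow, Real.norm_eq_abs, sq_abs]
      _ ≤ C * (t ^ 2 * (Ma + Mb) ^ 2) := by
          have h2 : ‖va x - vb y‖ ^ 2 ≤ (Ma + Mb) ^ 2 :=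
            pow_le_pow_left₀ (norm_nonneg _) hnrm 2
          exact mul_le_mul_of_nonneg_left
            (mul_le_mul_of_nonneg_left h2 (sq_nonneg t)) hC0
      _ = C * (Ma + Mb) ^ 2 * t ^ 2 := by ring
  -- outer integrands integrable
  have hF1 : Integrable (fun x => ∫ y, W ((x + t • va x) - (y + t • vb y)) ∂μb) μa := by
    have hcont : Continuous fun x => ∫ y, W ((x + t • va x) - (y + t • vb y)) ∂μb := by
      have hG : Continuous fun z => ∫ y, W (z - (y + t • vb y)) ∂μb :=
        aux_conv_cont1 hWc hWlip (continuous_id.add (hvbc.const_smul t)) μb hKb hμKb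
      exact hG.comp (continuous_id.add (hvac.const_smul t))
    exact aux_integrable_compact hcont μa hKa hμKa
  have hF2 : Integrable (fun x => ∫ y, W (x - y) ∂μb) μa := by
    have hcont : Continuous fun x => ∫ y, W (x - y) ∂μb :=
      aux_conv_cont1 hWc hWlip continuous_id μb hKb hμKb
    exact aux_integrable_compact hcont μa hKa hμKa
  have hF3 : Integrable (fun x => ∫ y, ⟪gradient W (x - y), va x - vb y⟫ ∂μb) μa := by
    have hq : Continuous fun p : E × E => ⟪gradient W (p.1 - p.2), va p.1 - vb p.2⟫ :=
      (hgWc.comp (continuous_fst.sub continuous_snd)).inner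
        ((hvac.comp continuous_fst).sub (hvbc.comp continuous_snd))
    have hm : AEStronglyMeasurable
        (fun x => ∫ y, ⟪gradient W (x - y), va x - vb y⟫ ∂μb) μa :=
      (hq.aestronglyMeasurable (μ := μa.prod μb)).integral_prod_right'
    apply Integrable.mono' (integrable_const ((μb Set.univ).toReal * (C * (Ma + Mb)))) hm
    filter_upwards [aux_ae_mem hμKa] with x hx
    rw [Real.norm_eq_abs]
    apply aux_norm_integral_le hμKb
    intro y hy
    calc |⟪gradient W (x - y), va x - vb y⟫| ≤ ‖gradient W (x - y)‖ * ‖va x - vb y‖ :=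
        abs_real_inner_le_norm _ _
      _ ≤ C * (Ma + Mb) := by
          apply mul_le_mul _ (le_trans (norm_sub_le _ _)
            (add_le_add (hMa x hx) (hMb y hy))) (norm_nonneg _) hC0
          rw [aux_norm_gradient]; exact (hC _).1
  -- assemble
  have heq : ∫ x, ((∫ y, W ((x + t • va x) - (y + t • vb y)) ∂μb) - (∫ y, W (x - y) ∂μb)
        - t * ∫ y, ⟪gradient W (x - y), va x - vb y⟫ ∂μb) ∂μa
      = (∫ x, ∫ y, W ((x + t • va x) - (y + t • vb y)) ∂μb ∂μa)
        - (∫ x, ∫ y, W (x - y) ∂μb ∂μa)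
        - t * ∫ x, ∫ y, ⟪gradient W (x - y), va x - vb y⟫ ∂μb ∂μa := by
    have h12 : Integrable (fun x => (∫ y, W ((x + t • va x) - (y + t • vb y)) ∂μb)
        - (∫ y, W (x - y) ∂μb)) μa := hF1.sub hF2
    have h3' : Integrable (fun x => t * ∫ y, ⟪gradient W (x - y), va x - vb y⟫ ∂μb) μa :=
      hF3.const_mul t
    rw [integral_sub h12 h3', integral_sub hF1 hF2, integral_const_mul]
  rw [← heq]
  have key : |∫ x, ((∫ y, W ((x + t • va x) - (y + t • vb y)) ∂μb) - (∫ y, W (x - y) ∂μb)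
        - t * ∫ y, ⟪gradient W (x - y), va x - vb y⟫ ∂μb) ∂μa|
      ≤ (μa Set.univ).toReal * ((μb Set.univ).toReal * (C * (Ma + Mb) ^ 2 * t ^ 2)) := by
    apply aux_norm_integral_le hμKa
    intro x hx
    rw [← hinner x]
    apply aux_norm_integral_le hμKb
    intro y hy
    exact hpt x hx y hy
  calc |∫ x, ((∫ y, W ((x + t • va x) - (y + t • vb y)) ∂μb) - (∫ y, W (x - y) ∂μb)
        - t * ∫ y, ⟪gradient W (x - y), va x - vb y⟫ ∂μb) ∂μa|
      ≤ (μa Set.univ).toReal * ((μb Set.univ).toReal * (C * (Ma + Mb) ^ 2 * t ^ 2)) := key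
    _ = C * (Ma + Mb) ^ 2 * (μa Set.univ).toReal * (μb Set.univ).toReal * t ^ 2 := by ring

end EstB

section First
variable {E : Type*} [NormedAddCommGroup E] [InnerProductSpace ℝ E] [CompleteSpace E]
  [MeasurableSpace E] [BorelSpace E] [SecondCountableTopology E]

lemma aux_prod_ae_snd {μa μb : Measure E} [IsFiniteMeasure μa] [IsFiniteMeasure μb]
    {Kb : Set E} (hμKb : μb Kbᶜ = 0) : ∀ᵐ p ∂(μa.prod μb), p.2 ∈ Kb := by
  rw [ae_iff]
  have h1 : {p : E × E | ¬ p.2 ∈ Kb} = Set.univ ×ˢ Kbᶜ := by ext p; simp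
  rw [h1, Measure.prod_prod, hμKb, mul_zero]

lemma firstorder {ν : ℕ} (μ : Fin ν → Measure E) (hfin : ∀ α, IsFiniteMeasure (μ α))
    (K : Fin ν → Set E) (hK : ∀ α, IsCompact (K α)) (hμK : ∀ α, μ α (K α)ᶜ = 0)
    (V : Fin ν → E → ℝ) (W : Fin ν → Fin ν → E → ℝ)
    (hV : ∀ α, ContDiff ℝ 2 (V α)) (hW : ∀ α β, ContDiff ℝ 2 (W α β))
    (hWbd : ∀ α β, ∃ C : ℝ, ∀ x, ‖fderiv ℝ (W α β) x‖ ≤ C ∧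
      ‖fderiv ℝ (fderiv ℝ (W α β)) x‖ ≤ C)
    (hWeven : ∀ α β ξ, W α β (-ξ) = W α β ξ)
    (hWsymm : ∀ α β, W α β = W β α)
    (v : Fin ν → E → E)
    (hv : ∀ α x, v α x = gradient (V α) x + ∑ β, ∫ y, gradient (W α β) (x - y) ∂(μ β))
    (hvc : ∀ α, Continuous (v α)) :
    ∑ α, ((∫ x, ⟪gradient (V α) x, v α x⟫ ∂μ α)
        + (1/2) * ∑ β, ∫ x, ∫ y, ⟪gradient (W α β) (x - y), v α x - v β y⟫ ∂μ β ∂μ α)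
      = ∑ α, ∫ x, ‖v α x‖ ^ 2 ∂μ α := by
  haveI := hfin
  choose CW hCW using hWbd
  have hCW0 : ∀ α β, 0 ≤ CW α β := fun α β => le_trans (norm_nonneg _) (hCW α β 0).1
  have hWd : ∀ α β, Differentiable ℝ (W α β) := fun α β => (hW α β).differentiable two_ne_zero
  have hgWc : ∀ α β, Continuous (gradient (W α β)) := fun α β =>
    (InnerProductSpace.toDual ℝ E).symm.continuous.comp
      (((hW α β).fderiv_right (m := 1) (by norm_num)).continuous)
  have hgWbd : ∀ α β z, ‖gradient (W α β) z‖ ≤ CW α β := fun α β z => by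
    rw [aux_norm_gradient]; exact (hCW α β z).1
  have hgWlip : ∀ α β (a b : E), ‖gradient (W α β) a - gradient (W α β) b‖
      ≤ CW α β * ‖a - b‖ := fun α β a b => by
    rw [aux_gradient_sub, LinearIsometryEquiv.norm_map]
    exact aux_fderiv_lip (hW α β) (fun z => (hCW α β z).2) a b
  have hgVc : ∀ α, Continuous (gradient (V α)) := fun α =>
    (InnerProductSpace.toDual ℝ E).symm.continuous.comp
      (((hV α).fderiv_right (m := 1) (by norm_num)).continuous)
  have hu_cont : ∀ α β, Continuous fun x => ∫ y, gradient (W α β) (x - y) ∂μ β :=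
    fun α β => aux_conv_cont2 (hgWc α β) (hgWbd α β) (hgWlip α β) (μ β)
  choose M hM using fun α => (hK α).exists_bound_of_continuousOn (hvc α).continuousOn
  -- integrability of y ↦ grad W (x - y)
  have hgint : ∀ α β (x : E), Integrable (fun y => gradient (W α β) (x - y)) (μ β) :=
    fun α β x => Integrable.mono' (integrable_const (CW α β))
      ((hgWc α β).comp (continuous_const.sub continuous_id)).aestronglyMeasurable
      (Filter.Eventually.of_forall fun y => hgWbd α β _)
  -- inner swap: ⟪∫ grad, c⟫ = ∫ ⟪grad, c⟫
  have hswap : ∀ α β (x : E) (c : E),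
      ⟪∫ y, gradient (W α β) (x - y) ∂μ β, c⟫
        = ∫ y, ⟪gradient (W α β) (x - y), c⟫ ∂μ β := by
    intro α β x c
    rw [real_inner_comm, ← integral_inner (hgint α β x)]
    simp_rw [real_inner_comm]
  -- Step I1: pointwise expansion of ‖v‖²
  have hI1 : ∀ α (x : E), ‖v α x‖ ^ 2 = ⟪gradient (V α) x, v α x⟫
      + ∑ β, ∫ y, ⟪gradient (W α β) (x - y), v α x⟫ ∂μ β := by
    intro α x
    have h1 : (‖v α x‖ : ℝ) ^ 2 = ⟪v α x, v α x⟫ := (real_inner_self_eq_norm_sq _).symm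
    rw [h1]
    nth_rewrite 1 [hv α x]
    rw [inner_add_left, sum_inner]
    congr 1
    exact Finset.sum_congr rfl fun β _ => hswap α β x (v α x)
  -- integrability of x ↦ ∫ y ⟪grad W (x-y), v α x⟫ (it equals a continuous function)
  have hPfun : ∀ α β, (fun x => ∫ y, ⟪gradient (W α β) (x - y), v α x⟫ ∂μ β)
      = fun x => ⟪∫ y, gradient (W α β) (x - y) ∂μ β, v α x⟫ :=
    fun α β => funext fun x => (hswap α β x (v α x)).symm
  have hPcont : ∀ α β, Continuous fun x => ∫ y, ⟪gradient (W α β) (x - y), v α x⟫ ∂μ β :=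
    fun α β => by rw [hPfun α β]; exact (hu_cont α β).inner (hvc α)
  have hPint : ∀ α β, Integrable (fun x => ∫ y, ⟪gradient (W α β) (x - y), v α x⟫ ∂μ β)
      (μ α) := fun α β => aux_integrable_compact (hPcont α β) (μ α) (hK α) (hμK α)
  -- Step I2: integral expansion
  have hI2 : ∀ α, ∫ x, ‖v α x‖ ^ 2 ∂μ α
      = (∫ x, ⟪gradient (V α) x, v α x⟫ ∂μ α)
        + ∑ β, ∫ x, ∫ y, ⟪gradient (W α β) (x - y), v α x⟫ ∂μ β ∂μ α := by
    intro α
    have hA : Integrable (fun x => ⟪gradient (V α) x, v α x⟫) (μ α) :=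
      aux_integrable_compact ((hgVc α).inner (hvc α)) (μ α) (hK α) (hμK α)
    have hsum : Integrable (fun x => ∑ β, ∫ y, ⟪gradient (W α β) (x - y), v α x⟫ ∂μ β)
        (μ α) := integrable_finset_sum _ fun β _ => hPint α β
    calc ∫ x, ‖v α x‖ ^ 2 ∂μ α
        = ∫ x, (⟪gradient (V α) x, v α x⟫
            + ∑ β, ∫ y, ⟪gradient (W α β) (x - y), v α x⟫ ∂μ β) ∂μ α := by
          congr 1; exact funext fun x => hI1 α x
      _ = _ := by
          rw [integral_add hA hsum, integral_finset_sum _ fun β _ => hPint α β]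
  -- integrability of Q-type integrands
  have hqcont : ∀ α β, Continuous fun p : E × E => ⟪gradient (W α β) (p.1 - p.2), v β p.2⟫ :=
    fun α β => ((hgWc α β).comp (continuous_fst.sub continuous_snd)).inner
      ((hvc β).comp continuous_snd)
  have hQprod : ∀ α β, Integrable
      (Function.uncurry fun x y => ⟪gradient (W α β) (x - y), v β y⟫)
      ((μ α).prod (μ β)) := by
    intro α β
    apply Integrable.mono' (integrable_const (CW α β * M β))
      (by exact (hqcont α β).aestronglyMeasurable)
    filter_upwards [aux_prod_ae_snd (μa := μ α) (hμK β)] with p hp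
    calc ‖⟪gradient (W α β) (p.1 - p.2), v β p.2⟫‖
        ≤ ‖gradient (W α β) (p.1 - p.2)‖ * ‖v β p.2‖ := norm_inner_le_norm _ _
      _ ≤ CW α β * M β := mul_le_mul (hgWbd α β _) (hM β _ hp) (norm_nonneg _) (hCW0 α β)
  have hQint : ∀ α β, Integrable (fun x => ∫ y, ⟪gradient (W α β) (x - y), v β y⟫ ∂μ β)
      (μ α) := by
    intro α β
    have hm : AEStronglyMeasurable
        (fun x => ∫ y, ⟪gradient (W α β) (x - y), v β y⟫ ∂μ β) (μ α) :=
      ((hqcont α β).aestronglyMeasurable (μ := (μ α).prod (μ β))).integral_prod_right'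
    apply Integrable.mono' (integrable_const ((μ β Set.univ).toReal * (CW α β * M β))) hm
    apply Filter.Eventually.of_forall
    intro x
    rw [Real.norm_eq_abs]
    apply aux_norm_integral_le (hμK β)
    intro y hy
    calc |⟪gradient (W α β) (x - y), v β y⟫|
        ≤ ‖gradient (W α β) (x - y)‖ * ‖v β y‖ := abs_real_inner_le_norm _ _
      _ ≤ CW α β * M β := mul_le_mul (hgWbd α β _) (hM β _ hy) (norm_nonneg _) (hCW0 α β)
  -- Step I3: split b into P - Q
  have hI3 : ∀ α β, ∫ x, ∫ y, ⟪gradient (W α β) (x - y), v α x - v β y⟫ ∂μ β ∂μ α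
      = (∫ x, ∫ y, ⟪gradient (W α β) (x - y), v α x⟫ ∂μ β ∂μ α)
        - ∫ x, ∫ y, ⟪gradient (W α β) (x - y), v β y⟫ ∂μ β ∂μ α := by
    intro α β
    have hin : ∀ x : E, ∫ y, ⟪gradient (W α β) (x - y), v α x - v β y⟫ ∂μ β
        = (∫ y, ⟪gradient (W α β) (x - y), v α x⟫ ∂μ β)
          - ∫ y, ⟪gradient (W α β) (x - y), v β y⟫ ∂μ β := by
      intro x
      have jP : Integrable (fun y => ⟪gradient (W α β) (x - y), v α x⟫) (μ β) :=
        aux_integrable_compact (((hgWc α β).comp (continuous_const.sub continuous_id)).inner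
          continuous_const) (μ β) (hK β) (hμK β)
      have jQ : Integrable (fun y => ⟪gradient (W α β) (x - y), v β y⟫) (μ β) :=
        aux_integrable_compact (((hgWc α β).comp (continuous_const.sub continuous_id)).inner
          (hvc β)) (μ β) (hK β) (hμK β)
      simp_rw [inner_sub_right]
      exact integral_sub jP jQ
    calc ∫ x, ∫ y, ⟪gradient (W α β) (x - y), v α x - v β y⟫ ∂μ β ∂μ α
        = ∫ x, ((∫ y, ⟪gradient (W α β) (x - y), v α x⟫ ∂μ β)
            - ∫ y, ⟪gradient (W α β) (x - y), v β y⟫ ∂μ β) ∂μ α := by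
          congr 1; exact funext hin
      _ = _ := integral_sub (hPint α β) (hQint α β)
  -- Step I4: Q α β = - P β α  (Fubini + evenness + symmetry)
  have hI4 : ∀ α β, ∫ x, ∫ y, ⟪gradient (W α β) (x - y), v β y⟫ ∂μ β ∂μ α
      = - ∫ x, ∫ y, ⟪gradient (W β α) (x - y), v β x⟫ ∂μ α ∂μ β := by
    intro α β
    have hgflip : ∀ x y : E, gradient (W β α) (x - y) = - gradient (W α β) (y - x) := by
      intro x y
      rw [← hWsymm α β, ← neg_sub y x, aux_gradient_even (hWd α β) (hWeven α β)]
    have hfub := integral_integral_swap (f := fun x y => ⟪gradient (W α β) (x - y), v β y⟫)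
      (hQprod α β)
    rw [hfub]
    rw [← neg_neg (∫ y, ∫ x, ⟪gradient (W α β) (x - y), v β y⟫ ∂μ α ∂μ β)]
    congr 1
    rw [← integral_neg]
    congr 1
    funext x
    rw [← integral_neg]
    congr 1
    funext y
    rw [hgflip x y, inner_neg_left]
  -- assemble
  have hQsum : ∑ α, ∑ β, (∫ x, ∫ y, ⟪gradient (W α β) (x - y), v β y⟫ ∂μ β ∂μ α)
      = - ∑ α, ∑ β, ∫ x, ∫ y, ⟪gradient (W α β) (x - y), v α x⟫ ∂μ β ∂μ α := by
    calc ∑ α, ∑ β, (∫ x, ∫ y, ⟪gradient (W α β) (x - y), v β y⟫ ∂μ β ∂μ α)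
        = ∑ α, ∑ β, (- ∫ x, ∫ y, ⟪gradient (W β α) (x - y), v β x⟫ ∂μ α ∂μ β) :=
          Finset.sum_congr rfl fun α _ => Finset.sum_congr rfl fun β _ => hI4 α β
      _ = - ∑ α, ∑ β, (∫ x, ∫ y, ⟪gradient (W β α) (x - y), v β x⟫ ∂μ α ∂μ β) := by
          simp
      _ = - ∑ α, ∑ β, ∫ x, ∫ y, ⟪gradient (W α β) (x - y), v α x⟫ ∂μ β ∂μ α := by
          rw [Finset.sum_comm]
  calc ∑ α, ((∫ x, ⟪gradient (V α) x, v α x⟫ ∂μ α)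
        + (1/2) * ∑ β, ∫ x, ∫ y, ⟪gradient (W α β) (x - y), v α x - v β y⟫ ∂μ β ∂μ α)
      = ∑ α, ((∫ x, ⟪gradient (V α) x, v α x⟫ ∂μ α)
        + (1/2) * ∑ β, ((∫ x, ∫ y, ⟪gradient (W α β) (x - y), v α x⟫ ∂μ β ∂μ α)
          - ∫ x, ∫ y, ⟪gradient (W α β) (x - y), v β y⟫ ∂μ β ∂μ α)) := by
        apply Finset.sum_congr rfl; intro α _
        congr 1; congr 1
        exact Finset.sum_congr rfl fun β _ => hI3 α β
    _ = (∑ α, ∫ x, ⟪gradient (V α) x, v α x⟫ ∂μ α)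
        + (1/2) * (∑ α, ∑ β, ∫ x, ∫ y, ⟪gradient (W α β) (x - y), v α x⟫ ∂μ β ∂μ α)
        - (1/2) * (∑ α, ∑ β, ∫ x, ∫ y, ⟪gradient (W α β) (x - y), v β y⟫ ∂μ β ∂μ α) := by
        rw [Finset.sum_add_distrib, ← Finset.mul_sum]
        have hT : ∑ α, ∑ β, ((∫ x, ∫ y, ⟪gradient (W α β) (x - y), v α x⟫ ∂μ β ∂μ α)
              - ∫ x, ∫ y, ⟪gradient (W α β) (x - y), v β y⟫ ∂μ β ∂μ α)
            = (∑ α, ∑ β, ∫ x, ∫ y, ⟪gradient (W α β) (x - y), v α x⟫ ∂μ β ∂μ α)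
              - ∑ α, ∑ β, ∫ x, ∫ y, ⟪gradient (W α β) (x - y), v β y⟫ ∂μ β ∂μ α := by
          simp [Finset.sum_sub_distrib]
        rw [hT, mul_sub]
        ring
    _ = ∑ α, ∫ x, ‖v α x‖ ^ 2 ∂μ α := by
        rw [hQsum]
        rw [Finset.sum_congr rfl fun α _ => hI2 α]
        rw [Finset.sum_add_distrib]
        ring
end First

section SForm
variable {E : Type*} [NormedAddCommGroup E] [InnerProductSpace ℝ E] [CompleteSpace E]
  [MeasurableSpace E] [BorelSpace E] [SecondCountableTopology E]

lemma Sform {ν : ℕ} (μ : Fin ν → Measure E) (hfin : ∀ α, IsFiniteMeasure (μ α))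
    (K : Fin ν → Set E) (hK : ∀ α, IsCompact (K α)) (hμK : ∀ α, μ α (K α)ᶜ = 0)
    (V : Fin ν → E → ℝ) (W : Fin ν → Fin ν → E → ℝ)
    (hV : ∀ α, ContDiff ℝ 2 (V α)) (hW : ∀ α β, ContDiff ℝ 2 (W α β))
    (hWbd : ∀ α β, ∃ C : ℝ, ∀ x, ‖fderiv ℝ (W α β) x‖ ≤ C ∧
      ‖fderiv ℝ (fderiv ℝ (W α β)) x‖ ≤ C)
    (v : Fin ν → E → E) (hvc : ∀ α, Continuous (v α))
    (χ : Fin ν → ℝ → E → E) (hχ : ∀ α Δt x, χ α Δt x = x + Δt • v α x)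
    (S : ℝ → ℝ)
    (hS : ∀ Δt, S Δt = ∑ α, ∫ x,
      (V α x + (1/2) * ∑ β, ∫ y, W α β (x - y) ∂(Measure.map (χ β Δt) (μ β)))
      ∂(Measure.map (χ α Δt) (μ α))) (t : ℝ) :
    S t = ∑ α, ((∫ x, V α (x + t • v α x) ∂μ α)
      + (1/2) * ∑ β, ∫ x, ∫ y, W α β ((x + t • v α x) - (y + t • v β y)) ∂μ β ∂μ α) := by
  haveI := hfin
  choose CW hCW using hWbd
  have hWd : ∀ α β, Differentiable ℝ (W α β) := fun α β => (hW α β).differentiable two_ne_zero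
  have hWlip : ∀ α β (a b : E), |W α β a - W α β b| ≤ CW α β * ‖a - b‖ := fun α β a b => by
    simpa [Real.norm_eq_abs] using aux_lip (hWd α β) (fun x => (hCW α β x).1) a b
  have hWc : ∀ α β, Continuous (W α β) := fun α β => (hW α β).continuous
  have hχc : ∀ γ, Continuous (χ γ t) := by
    intro γ
    have h : χ γ t = fun x => x + t • v γ x := funext (hχ γ t)
    rw [h]; exact continuous_id.add ((hvc γ).const_smul t)
  have hinnermap : ∀ α β (x : E),
      ∫ y, W α β (x - y) ∂(Measure.map (χ β t) (μ β))
        = ∫ y, W α β (x - (y + t • v β y)) ∂μ β := by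
    intro α β x
    rw [integral_map (hχc β).aemeasurable
      ((show Continuous fun y : E => W α β (x - y) from
        (hWc α β).comp (continuous_const.sub continuous_id)).aestronglyMeasurable)]
    simp only [hχ]
  have hconvc : ∀ α β, Continuous fun x => ∫ y, W α β (x - (y + t • v β y)) ∂μ β :=
    fun α β => aux_conv_cont1 (hWc α β) (hWlip α β)
      (continuous_id.add ((hvc β).const_smul t)) (μ β) (hK β) (hμK β)
  rw [hS t]
  apply Finset.sum_congr rfl
  intro α _
  have hstep1 : (fun x => V α x
        + (1/2) * ∑ β, ∫ y, W α β (x - y) ∂(Measure.map (χ β t) (μ β)))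
      = fun x => V α x + (1/2) * ∑ β, ∫ y, W α β (x - (y + t • v β y)) ∂μ β := by
    funext x
    congr 1
    congr 1
    exact Finset.sum_congr rfl fun β _ => hinnermap α β x
  rw [hstep1]
  have hfcont : Continuous fun x =>
      V α x + (1/2) * ∑ β, ∫ y, W α β (x - (y + t • v β y)) ∂μ β :=
    (hV α).continuous.add (continuous_const.mul
      (continuous_finset_sum _ fun β _ => hconvc α β))
  rw [integral_map (hχc α).aemeasurable hfcont.aestronglyMeasurable]
  simp only [hχ]
  have h1 : Integrable (fun x => V α (x + t • v α x)) (μ α) :=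
    aux_integrable_compact ((hV α).continuous.comp
      (continuous_id.add ((hvc α).const_smul t))) (μ α) (hK α) (hμK α)
  have hsummandc : ∀ β, Continuous fun x =>
      ∫ y, W α β ((x + t • v α x) - (y + t • v β y)) ∂μ β := fun β =>
    (hconvc α β).comp (continuous_id.add ((hvc α).const_smul t))
  have hsummandint : ∀ β, Integrable
      (fun x => ∫ y, W α β ((x + t • v α x) - (y + t • v β y)) ∂μ β) (μ α) := fun β =>
    aux_integrable_compact (hsummandc β) (μ α) (hK α) (hμK α)
  have h2 : Integrable (fun x =>
      (1/2) * ∑ β, ∫ y, W α β ((x + t • v α x) - (y + t • v β y)) ∂μ β) (μ α) :=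
    (integrable_finset_sum _ fun β _ => hsummandint β).const_mul _
  rw [integral_add h1 h2, integral_const_mul,
    integral_finset_sum _ fun β _ => hsummandint β]

end SForm

section Core
variable {E : Type*} [NormedAddCommGroup E] [InnerProductSpace ℝ E] [CompleteSpace E]
  [MeasurableSpace E] [BorelSpace E] [SecondCountableTopology E]

theorem core_entropy {ν : ℕ} (μ : Fin ν → Measure E)
    (hfin : ∀ α, IsFiniteMeasure (μ α))
    (K : Fin ν → Set E) (hK : ∀ α, IsCompact (K α)) (hμK : ∀ α, μ α (K α)ᶜ = 0)
    (V : Fin ν → E → ℝ) (W : Fin ν → Fin ν → E → ℝ)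
    (hV : ∀ α, ContDiff ℝ 2 (V α)) (hW : ∀ α β, ContDiff ℝ 2 (W α β))
    (hVbd : ∀ α, ∃ C : ℝ, ∀ x, ‖fderiv ℝ (V α) x‖ ≤ C ∧
      ‖fderiv ℝ (fderiv ℝ (V α)) x‖ ≤ C)
    (hWbd : ∀ α β, ∃ C : ℝ, ∀ x, ‖fderiv ℝ (W α β) x‖ ≤ C ∧
      ‖fderiv ℝ (fderiv ℝ (W α β)) x‖ ≤ C)
    (hWeven : ∀ α β ξ, W α β (-ξ) = W α β ξ)
    (hWsymm : ∀ α β, W α β = W β α)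
    (v : Fin ν → E → E)
    (hv : ∀ α x, v α x = gradient (V α) x + ∑ β, ∫ y, gradient (W α β) (x - y) ∂(μ β))
    (χ : Fin ν → ℝ → E → E)
    (hχ : ∀ α Δt x, χ α Δt x = x + Δt • v α x)
    (S : ℝ → ℝ)
    (hS : ∀ Δt, S Δt = ∑ α, ∫ x,
      (V α x + (1/2) * ∑ β, ∫ y, W α β (x - y) ∂(Measure.map (χ β Δt) (μ β)))
      ∂(Measure.map (χ α Δt) (μ α))) :
    (fun Δt => S Δt - S 0 - Δt * ∑ α, ∫ x, ‖v α x‖ ^ 2 ∂(μ α))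
      =O[𝓝[>] (0:ℝ)] fun Δt => Δt ^ 2 := by
  choose CV hCV using hVbd
  choose CW hCW using hWbd
  -- continuity of v
  have hgWc : ∀ α β, Continuous (gradient (W α β)) := fun α β =>
    (InnerProductSpace.toDual ℝ E).symm.continuous.comp
      (((hW α β).fderiv_right (m := 1) (by norm_num)).continuous)
  have hgWbd : ∀ α β z, ‖gradient (W α β) z‖ ≤ CW α β := fun α β z => by
    rw [aux_norm_gradient]; exact (hCW α β z).1
  have hgWlip : ∀ α β (a b : E), ‖gradient (W α β) a - gradient (W α β) b‖
      ≤ CW α β * ‖a - b‖ := fun α β a b => by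
    rw [aux_gradient_sub, LinearIsometryEquiv.norm_map]
    exact aux_fderiv_lip (hW α β) (fun z => (hCW α β z).2) a b
  have hgVc : ∀ α, Continuous (gradient (V α)) := fun α =>
    (InnerProductSpace.toDual ℝ E).symm.continuous.comp
      (((hV α).fderiv_right (m := 1) (by norm_num)).continuous)
  have hu_cont : ∀ α β, Continuous fun x => ∫ y, gradient (W α β) (x - y) ∂μ β := by
    intro α β
    haveI := hfin β
    exact aux_conv_cont2 (hgWc α β) (hgWbd α β) (hgWlip α β) (μ β)
  have hvc : ∀ α, Continuous (v α) := by
    intro α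
    have h : v α = fun x => gradient (V α) x
        + ∑ β, ∫ y, gradient (W α β) (x - y) ∂μ β := funext (hv α)
    rw [h]
    exact (hgVc α).add (continuous_finset_sum _ fun β _ => hu_cont α β)
  choose M hM using fun α => (hK α).exists_bound_of_continuousOn (hvc α).continuousOn
  have hfirst := firstorder μ hfin K hK hμK V W hV hW
    (fun α β => ⟨CW α β, hCW α β⟩) hWeven hWsymm v hv hvc
  have hSf := Sform μ hfin K hK hμK V W hV hW (fun α β => ⟨CW α β, hCW α β⟩)
    v hvc χ hχ S hS
  have hS0 : S 0 = ∑ α, ((∫ x, V α x ∂μ α)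
      + (1/2) * ∑ β, ∫ x, ∫ y, W α β (x - y) ∂μ β ∂μ α) := by
    have h := hSf 0
    simpa using h
  have hAest : ∀ α (t : ℝ),
      |(∫ x, V α (x + t • v α x) ∂μ α) - (∫ x, V α x ∂μ α)
        - t * ∫ x, ⟪gradient (V α) x, v α x⟫ ∂μ α|
      ≤ CV α * M α ^ 2 * (μ α Set.univ).toReal * t ^ 2 := by
    intro α t
    haveI := hfin α
    exact estA (μ α) (hK α) (hμK α) (hV α) (hCV α) (hvc α) (hM α) t
  have hBest : ∀ α β (t : ℝ),
      |(∫ x, ∫ y, W α β ((x + t • v α x) - (y + t • v β y)) ∂μ β ∂μ α)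
        - (∫ x, ∫ y, W α β (x - y) ∂μ β ∂μ α)
        - t * ∫ x, ∫ y, ⟪gradient (W α β) (x - y), v α x - v β y⟫ ∂μ β ∂μ α|
      ≤ CW α β * (M α + M β) ^ 2 * (μ α Set.univ).toReal * (μ β Set.univ).toReal
          * t ^ 2 := by
    intro α β t
    haveI := hfin α; haveI := hfin β
    exact estB (μ α) (μ β) (hK α) (hK β) (hμK α) (hμK β) (hW α β) (hCW α β)
      (hvc α) (hvc β) (hM α) (hM β) t
  set CA : Fin ν → ℝ := fun α => CV α * M α ^ 2 * (μ α Set.univ).toReal with hCA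
  set CB : Fin ν → Fin ν → ℝ := fun α β =>
    CW α β * (M α + M β) ^ 2 * (μ α Set.univ).toReal * (μ β Set.univ).toReal with hCB
  set Ctot : ℝ := ∑ α, (CA α + (1/2) * ∑ β, CB α β) with hCtot
  have hmain : ∀ t : ℝ, |S t - S 0 - t * ∑ α, ∫ x, ‖v α x‖ ^ 2 ∂μ α| ≤ Ctot * t ^ 2 := by
    intro t
    rw [hSf t, hS0, ← hfirst]
    have hβeq : ∀ α, ∑ β,
        ((∫ x, ∫ y, W α β ((x + t • v α x) - (y + t • v β y)) ∂μ β ∂μ α)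
          - (∫ x, ∫ y, W α β (x - y) ∂μ β ∂μ α)
          - t * ∫ x, ∫ y, ⟪gradient (W α β) (x - y), v α x - v β y⟫ ∂μ β ∂μ α)
        = (∑ β, ∫ x, ∫ y, W α β ((x + t • v α x) - (y + t • v β y)) ∂μ β ∂μ α)
          - (∑ β, ∫ x, ∫ y, W α β (x - y) ∂μ β ∂μ α)
          - t * ∑ β, ∫ x, ∫ y, ⟪gradient (W α β) (x - y), v α x - v β y⟫ ∂μ β ∂μ α := by
      intro α
      simp [Finset.sum_sub_distrib, Finset.mul_sum]
    have hsplit : (∑ α, ((∫ x, V α (x + t • v α x) ∂μ α)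
          + (1/2) * ∑ β, ∫ x, ∫ y, W α β ((x + t • v α x) - (y + t • v β y)) ∂μ β ∂μ α))
        - (∑ α, ((∫ x, V α x ∂μ α) + (1/2) * ∑ β, ∫ x, ∫ y, W α β (x - y) ∂μ β ∂μ α))
        - t * ∑ α, ((∫ x, ⟪gradient (V α) x, v α x⟫ ∂μ α)
          + (1/2) * ∑ β, ∫ x, ∫ y, ⟪gradient (W α β) (x - y), v α x - v β y⟫ ∂μ β ∂μ α)
        = ∑ α, (((∫ x, V α (x + t • v α x) ∂μ α) - (∫ x, V α x ∂μ α)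
            - t * ∫ x, ⟪gradient (V α) x, v α x⟫ ∂μ α)
          + (1/2) * ∑ β,
            ((∫ x, ∫ y, W α β ((x + t • v α x) - (y + t • v β y)) ∂μ β ∂μ α)
              - (∫ x, ∫ y, W α β (x - y) ∂μ β ∂μ α)
              - t * ∫ x, ∫ y, ⟪gradient (W α β) (x - y), v α x - v β y⟫ ∂μ β ∂μ α)) := by
      rw [Finset.mul_sum, ← Finset.sum_sub_distrib, ← Finset.sum_sub_distrib]
      apply Finset.sum_congr rfl
      intro α _
      rw [hβeq α]
      ring
    rw [hsplit]
    calc |∑ α, _| ≤ ∑ α, |(((∫ x, V α (x + t • v α x) ∂μ α) - (∫ x, V α x ∂μ α)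
            - t * ∫ x, ⟪gradient (V α) x, v α x⟫ ∂μ α)
          + (1/2) * ∑ β,
            ((∫ x, ∫ y, W α β ((x + t • v α x) - (y + t • v β y)) ∂μ β ∂μ α)
              - (∫ x, ∫ y, W α β (x - y) ∂μ β ∂μ α)
              - t * ∫ x, ∫ y, ⟪gradient (W α β) (x - y), v α x - v β y⟫ ∂μ β ∂μ α))| :=
        Finset.abs_sum_le_sum_abs _ _
      _ ≤ ∑ α, (CA α * t ^ 2 + (1/2) * ∑ β, CB α β * t ^ 2) := by
        apply Finset.sum_le_sum
        intro α _
        refine le_trans (abs_add_le _ _) (add_le_add (hAest α t) ?_)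
        rw [abs_mul, abs_of_pos (by norm_num : (0:ℝ) < 1/2)]
        apply mul_le_mul_of_nonneg_left _ (by norm_num : (0:ℝ) ≤ 1/2)
        refine le_trans (Finset.abs_sum_le_sum_abs _ _) ?_
        exact Finset.sum_le_sum fun β _ => hBest α β t
      _ = Ctot * t ^ 2 := by
        rw [hCtot, Finset.sum_mul]
        apply Finset.sum_congr rfl
        intro α _
        rw [← Finset.sum_mul]
        ring
  apply Asymptotics.IsBigO.of_bound Ctot
  apply Filter.Eventually.of_forall
  intro t
  rw [Real.norm_eq_abs, Real.norm_eq_abs, abs_of_nonneg (sq_nonneg t)]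
  exact hmain t

end Core


/-- **Theorem 4.32 (discrete-in-time entropy inequality, multi-component crowd).**
Finite, compactly supported, nonnegative measures `μ^α` on `ℝ^d` (absolutely continuous
with bounded densities), `C²` potentials `V^α` and `W^α_β` with bounded first and second
derivatives, `W^α_β` even and symmetric (`W^α_β = W^β_α`), partial velocities
`v^α = ∇V^α + Σ_β ∇W^α_β ⋆ μ^β`, motion mappings `χ^α_Δt(x) = x + Δt·v^α(x)`,
pushforwards `μ^α_Δt = χ^α_Δt#μ^α`, and entropy
`S(Δt) = Σ_α ∫ (V^α + ½ Σ_β W^α_β ⋆ μ^β_Δt) dμ^α_Δt`.  Then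
`S(Δt) = S(0) + Δt Σ_α ∫ |v^α|² dμ^α + O(Δt²)` as `Δt → 0⁺`; in particular, up to
`O(Δt²)`-terms, `S(Δt) ≥ S(0)`. -/
theorem discrete_time_entropy_inequality_multicomponent {d ν : ℕ}
    (μ : Fin ν → Measure (EuclideanSpace ℝ (Fin d)))
    (hfin : ∀ α, IsFiniteMeasure (μ α))
    (K : Fin ν → Set (EuclideanSpace ℝ (Fin d)))
    (hK : ∀ α, IsCompact (K α)) (hμK : ∀ α, μ α (K α)ᶜ = 0)
    (hac : ∀ α, μ α ≪ volume)
    (hbd : ∀ α, ∃ C : ℝ≥0∞, C ≠ ⊤ ∧ ∀ s, μ α s ≤ C * volume s)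
    (V : Fin ν → EuclideanSpace ℝ (Fin d) → ℝ)
    (W : Fin ν → Fin ν → EuclideanSpace ℝ (Fin d) → ℝ)
    (hV : ∀ α, ContDiff ℝ 2 (V α)) (hW : ∀ α β, ContDiff ℝ 2 (W α β))
    (hVbd : ∀ α, ∃ C : ℝ, ∀ x, ‖fderiv ℝ (V α) x‖ ≤ C ∧
      ‖fderiv ℝ (fderiv ℝ (V α)) x‖ ≤ C)
    (hWbd : ∀ α β, ∃ C : ℝ, ∀ x, ‖fderiv ℝ (W α β) x‖ ≤ C ∧
      ‖fderiv ℝ (fderiv ℝ (W α β)) x‖ ≤ C)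
    (hWeven : ∀ α β ξ, W α β (-ξ) = W α β ξ)
    (hWsymm : ∀ α β, W α β = W β α)
    (v : Fin ν → EuclideanSpace ℝ (Fin d) → EuclideanSpace ℝ (Fin d))
    (hv : ∀ α x, v α x = gradient (V α) x +
      ∑ β, ∫ y, gradient (W α β) (x - y) ∂(μ β))
    (χ : Fin ν → ℝ → EuclideanSpace ℝ (Fin d) → EuclideanSpace ℝ (Fin d))
    (hχ : ∀ α Δt x, χ α Δt x = x + Δt • v α x)
    (S : ℝ → ℝ)
    (hS : ∀ Δt, S Δt = ∑ α, ∫ x,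
      (V α x + (1/2) * ∑ β, ∫ y, W α β (x - y) ∂(Measure.map (χ β Δt) (μ β)))
      ∂(Measure.map (χ α Δt) (μ α))) :
    (fun Δt => S Δt - S 0 - Δt * ∑ α, ∫ x, ‖v α x‖ ^ 2 ∂(μ α))
      =O[𝓝[>] (0:ℝ)] fun Δt => Δt ^ 2 := by
  exact core_entropy μ hfin K hK hμK V W hV hW hVbd hWbd hWeven hWsymm v hv χ hχ S hS
end
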